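/- arXiv:1204.5923 — 7 statements merged into one kernel-verified Lean document; each statement's English description precedes it below -/
import Mathlib

section
/- For every nonnegative integer n, the sum over all pairs of nonnegative integers (i, j) with i + j = n of C_{2i} · C_{2j} equals 4^n · C_n, where C_m denotes the m-th Catalan number. -/
open Finset

private noncomputable def qc (m : ℕ) : ℚ := (catalan m : ℚ)

private lemma cat_step_nat (m : ℕ) : (m + 2) * catalan (m + 1) = 2 * (2 * m + 1) * catalan m := by
  have h1 := succ_mul_catalan_eq_centralBinom (m + 1)
  have h2 := Nat.succ_mul_centralBinom_succ m
  have h3 := succ_mul_catalan_eq_centralBinom m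
  have key : (m + 1) * ((m + 2) * catalan (m + 1)) = (m + 1) * (2 * (2 * m + 1) * catalan m) := by
    calc (m + 1) * ((m + 2) * catalan (m + 1)) = (m + 1) * Nat.centralBinom (m + 1) := by
          rw [← h1]
      _ = 2 * (2 * m + 1) * Nat.centralBinom m := h2
      _ = 2 * (2 * m + 1) * ((m + 1) * catalan m) := by rw [h3]
      _ = (m + 1) * (2 * (2 * m + 1) * catalan m) := by ring
  exact Nat.eq_of_mul_eq_mul_left (Nat.succ_pos m) key

private lemma cat_step (m : ℕ) : ((m : ℚ) + 2) * qc (m + 1) = 2 * (2 * m + 1) * qc m := by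
  have h : ((m : ℚ) + 2) * (catalan (m + 1) : ℚ) = 2 * (2 * (m : ℚ) + 1) * (catalan m : ℚ) := by
    exact_mod_cast cat_step_nat m
  unfold qc
  linarith

private lemma cat_step2 (m : ℕ) :
    ((2 * (m : ℚ) + 2) * (2 * m + 3)) * qc (2 * (m + 1))
      = 4 * (4 * m + 1) * (4 * m + 3) * qc (2 * m) := by
  have h1 := cat_step (2 * m)
  have h2 := cat_step (2 * m + 1)
  push_cast at h1 h2
  have e1 : 2 * (m + 1) = (2 * m + 1) + 1 := by ring
  rw [e1]
  nlinarith [h1, h2]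

private lemma srec (m : ℕ) :
    ((m : ℚ) + 2) * (∑ i ∈ range (m + 2), qc (2 * i) * qc (2 * (m + 1 - i)))
      = 8 * (2 * (m : ℚ) + 1) * (∑ i ∈ range (m + 1), qc (2 * i) * qc (2 * (m - i))) := by
  set g : ℕ → ℚ := fun i =>
    (i : ℚ) * (4 * (i : ℚ) ^ 2 - 6 * ((m : ℚ) + 1) * i - 3 * ((m : ℚ) + 1) - 1)
      * qc (2 * i) * qc (2 * (m + 1 - i)) with hg
  have claim1 : ∀ i ∈ range (m + 1),
      (((m : ℚ) + 1) * (2 * m + 3)) *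
        (((m : ℚ) + 2) * (qc (2 * i) * qc (2 * (m + 1 - i)))
          - 8 * (2 * (m : ℚ) + 1) * (qc (2 * i) * qc (2 * (m - i))))
        = g (i + 1) - g i := by
    intro i hi
    have him : i ≤ m := Nat.lt_succ_iff.mp (mem_range.mp hi)
    obtain ⟨j, rfl⟩ : ∃ j, m = i + j := ⟨m - i, by omega⟩
    have e1 : i + j + 1 - i = j + 1 := by omega
    have e2 : i + j - i = j := by omega
    have e3 : i + j + 1 - (i + 1) = j := by omega
    simp only [hg, e1, e2, e3]
    have hA := cat_step2 i
    have hB := cat_step2 j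
    have eA : qc (2 * (i + 1)) =
        4 * (4 * i + 1) * (4 * i + 3) * qc (2 * i) / ((2 * (i : ℚ) + 2) * (2 * i + 3)) := by
      rw [eq_div_iff (by positivity)]
      linear_combination hA
    have eB : qc (2 * (j + 1)) =
        4 * (4 * j + 1) * (4 * j + 3) * qc (2 * j) / ((2 * (j : ℚ) + 2) * (2 * j + 3)) := by
      rw [eq_div_iff (by positivity)]
      linear_combination hB
    rw [eA, eB]
    push_cast
    field_simp
    ring
  have top : (((m : ℚ) + 1) * (2 * m + 3)) * (((m : ℚ) + 2) *
      (qc (2 * (m + 1)) * qc (2 * (m + 1 - (m + 1))))) = - g (m + 1) := by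
    have e1 : m + 1 - (m + 1) = 0 := by omega
    have hq0 : qc (2 * 0) = 1 := by simp [qc]
    simp only [hg, e1, hq0]
    push_cast
    ring
  have g0 : g 0 = 0 := by simp [hg]
  have tele : ∑ i ∈ range (m + 1), (g (i + 1) - g i) = g (m + 1) - g 0 :=
    Finset.sum_range_sub g (m + 1)
  have hsum : (((m : ℚ) + 1) * (2 * m + 3)) *
      (((m : ℚ) + 2) * (∑ i ∈ range (m + 1), qc (2 * i) * qc (2 * (m + 1 - i)))
        - 8 * (2 * (m : ℚ) + 1) * (∑ i ∈ range (m + 1), qc (2 * i) * qc (2 * (m - i))))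
      = g (m + 1) := by
    calc (((m : ℚ) + 1) * (2 * m + 3)) *
        (((m : ℚ) + 2) * (∑ i ∈ range (m + 1), qc (2 * i) * qc (2 * (m + 1 - i)))
          - 8 * (2 * (m : ℚ) + 1) * (∑ i ∈ range (m + 1), qc (2 * i) * qc (2 * (m - i))))
        = ((((m : ℚ) + 1) * (2 * m + 3)) * ((m : ℚ) + 2)) *
            (∑ i ∈ range (m + 1), qc (2 * i) * qc (2 * (m + 1 - i)))
          - ((((m : ℚ) + 1) * (2 * m + 3)) * (8 * (2 * (m : ℚ) + 1))) *
            (∑ i ∈ range (m + 1), qc (2 * i) * qc (2 * (m - i))) := by ring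
      _ = ∑ i ∈ range (m + 1),
            (((((m : ℚ) + 1) * (2 * m + 3)) * ((m : ℚ) + 2)) * (qc (2 * i) * qc (2 * (m + 1 - i)))
              - ((((m : ℚ) + 1) * (2 * m + 3)) * (8 * (2 * (m : ℚ) + 1))) *
                  (qc (2 * i) * qc (2 * (m - i)))) := by
          rw [Finset.sum_sub_distrib, Finset.mul_sum, Finset.mul_sum]
      _ = ∑ i ∈ range (m + 1), (g (i + 1) - g i) := by
          refine Finset.sum_congr rfl fun i hi => ?_
          rw [← claim1 i hi]; ring
      _ = g (m + 1) := by rw [tele, g0, sub_zero]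
  have final : (((m : ℚ) + 1) * (2 * m + 3)) *
      (((m : ℚ) + 2) * (∑ i ∈ range (m + 2), qc (2 * i) * qc (2 * (m + 1 - i)))
        - 8 * (2 * (m : ℚ) + 1) * (∑ i ∈ range (m + 1), qc (2 * i) * qc (2 * (m - i)))) = 0 := by
    rw [Finset.sum_range_succ (fun i => qc (2 * i) * qc (2 * (m + 1 - i))) (m + 1)]
    linear_combination hsum + top
  have hMne : (((m : ℚ) + 1) * (2 * m + 3)) ≠ 0 := by positivity
  rcases mul_eq_zero.mp final with h | h
  · exact absurd h hMne
  · linarith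

private lemma shapiro_q (n : ℕ) :
    (∑ i ∈ range (n + 1), qc (2 * i) * qc (2 * (n - i))) = 4 ^ n * qc n := by
  induction n with
  | zero => simp [qc]
  | succ m ih =>
    have h := srec m
    rw [ih] at h
    have hstep := cat_step m
    have hne : ((m : ℚ) + 2) ≠ 0 := by positivity
    have : ((m : ℚ) + 2) * (∑ i ∈ range (m + 2), qc (2 * i) * qc (2 * (m + 1 - i)))
        = ((m : ℚ) + 2) * (4 ^ (m + 1) * qc (m + 1)) := by
      rw [h]
      linear_combination (-(4 : ℚ) ^ (m + 1)) * hstep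
    exact mul_left_cancel₀ hne this

/-- **Shapiro's Catalan convolution.** For every nonnegative integer `n`,
`∑_{i+j=n} C_{2i} C_{2j} = 4^n C_n`, where `C_m` is the `m`-th Catalan number. -/
theorem shapiro_catalan_convolution (n : ℕ) :
    ∑ ij ∈ Finset.HasAntidiagonal.antidiagonal n, catalan (2 * ij.1) * catalan (2 * ij.2) =
      4 ^ n * catalan n := by
  have key : ((∑ ij ∈ Finset.HasAntidiagonal.antidiagonal n, catalan (2 * ij.1) * catalan (2 * ij.2) : ℕ) : ℚ)
      = ((4 ^ n * catalan n : ℕ) : ℚ) := by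
    push_cast
    rw [Finset.Nat.sum_antidiagonal_eq_sum_range_succ_mk]
    have := shapiro_q n
    simpa [qc] using this
  exact_mod_cast key
end

section
/- For every nonnegative integer n, the sum over all pairs of nonnegative integers (i, j) with i + j = n of C_{2i} · B_{2j} equals 4^n · B_n, where C_m denotes the m-th Catalan number and B_m = binom(2m, m) is the m-th central binomial coefficient. -/
open Finset Polynomial

namespace CatalanConvAux

/-- The polynomial `r ↦ choose r a` (as a polynomial over `ℚ`). -/
noncomputable def pc (a : ℕ) : Polynomial ℚ :=
  Polynomial.C ((a.factorial : ℚ))⁻¹ * descPochhammer ℚ a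

lemma pc_eval_nat (a N : ℕ) : (pc a).eval (N : ℚ) = N.choose a := by
  have h := descPochhammer_eval_eq_descFactorial ℚ N a
  have hfac : (a.factorial : ℚ) ≠ 0 := by exact_mod_cast a.factorial_ne_zero
  simp only [pc, eval_mul, eval_C, h, Nat.descFactorial_eq_factorial_mul_choose]
  push_cast
  field_simp

lemma pc_succ_eval (a : ℕ) (r : ℚ) :
    (pc (a+1)).eval r = (pc a).eval r * (r - a) / (a+1) := by
  have h1 : (a.factorial : ℚ) ≠ 0 := by exact_mod_cast a.factorial_ne_zero
  have h2 : ((a:ℚ)+1) ≠ 0 := by positivity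
  simp only [pc, eval_mul, eval_C, descPochhammer_succ_eval, Nat.factorial_succ]
  push_cast
  rw [eq_div_iff h2, mul_inv]
  field_simp

lemma pc_eval_neg_one (a : ℕ) : (pc a).eval (-1 : ℚ) = (-1)^a := by
  induction a with
  | zero => simp [pc]
  | succ a ih =>
      rw [pc_succ_eval, ih]
      have h2 : ((a:ℚ)+1) ≠ 0 := by positivity
      field_simp
      ring

lemma pc_eval_neg_half (a : ℕ) :
    (pc a).eval (-(1/2) : ℚ) = (-1)^a * a.centralBinom / 4^a := by
  induction a with
  | zero => simp [pc, Nat.centralBinom]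
  | succ a ih =>
      rw [pc_succ_eval, ih]
      have h2 : ((a:ℚ)+1) ≠ 0 := by positivity
      have hB : ((a:ℚ)+1) * (a+1).centralBinom = 2 * (2*a+1) * a.centralBinom := by
        exact_mod_cast Nat.succ_mul_centralBinom_succ a
      have h4 : (4:ℚ)^a ≠ 0 := by positivity
      field_simp
      ring_nf
      ring_nf at hB
      linear_combination ((-1:ℚ))^a * 4^a * 2 * hB

lemma coeff_one_sub_X_pow (N a : ℕ) :
    (((1:ℚ[X]) - X)^N).coeff a = (-1:ℚ)^a * N.choose a := by
  have h : ((1:ℚ[X]) - X) = (-1) * (X + Polynomial.C (-1)) := by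
    simp [mul_add]; ring
  rw [h, mul_pow, show ((-1 : ℚ[X]))^N = Polynomial.C ((-1:ℚ)^N) by
    rw [← C_1, ← C_neg, ← C_pow], coeff_C_mul, coeff_X_add_C_pow]
  rcases le_or_gt a N with hle | hlt
  · have : N + (N - a) = a + 2*(N - a) := by omega
    rw [← mul_assoc, ← pow_add, this, pow_add, pow_mul]
    simp
  · simp [Nat.choose_eq_zero_of_lt hlt]

lemma neg_X_sq_pow (k : ℕ) : (-(X^2) : ℚ[X])^k = Polynomial.C ((-1:ℚ)^k) * X^(2*k) := by
  rw [neg_eq_neg_one_mul, mul_pow, ← pow_mul]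
  congr 1
  rw [← C_1, ← C_neg, ← C_pow]

lemma one_sub_X_sq_pow (N : ℕ) :
    ((1:ℚ[X]) - X^2)^N
      = ∑ k ∈ range (N+1), Polynomial.C ((-1:ℚ)^k * N.choose k) * X^(2*k) := by
  rw [sub_eq_add_neg, add_comm, add_pow]
  apply Finset.sum_congr rfl
  intro k _
  rw [one_pow, mul_one, neg_X_sq_pow, ← C_eq_natCast, mul_comm _ (X^(2*k)), mul_assoc, ← C_mul]
  ring

lemma coeff_one_sub_X_sq_pow (N n : ℕ) :
    (((1:ℚ[X]) - X^2)^N).coeff (2*n) = (-1:ℚ)^n * N.choose n := by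
  rw [one_sub_X_sq_pow, finset_sum_coeff]
  rw [Finset.sum_eq_single n]
  · rw [coeff_C_mul, coeff_X_pow]
    simp
  · intro b _ hbn
    rw [coeff_C_mul, coeff_X_pow]
    simp [show ¬ (2*n = 2*b) by omega]
  · intro hn
    have : N < n := by simpa using hn
    simp [Nat.choose_eq_zero_of_lt this]

lemma natP2 (N n : ℕ) :
    ∑ ij ∈ antidiagonal (2*n), ((-1:ℚ))^ij.1 * (N.choose ij.1) * (N.choose ij.2)
      = (-1)^n * N.choose n := by
  have key : ((1:ℚ[X]) - X)^N * (1+X)^N = (1 - X^2)^N := by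
    rw [← mul_pow]; ring_nf
  have h := congrArg (fun p : ℚ[X] => p.coeff (2*n)) key
  simp only [coeff_mul, coeff_one_sub_X_pow, coeff_one_add_X_pow, coeff_one_sub_X_sq_pow] at h
  simpa [mul_assoc] using h

lemma nat_roots_infinite {p : ℚ[X]} (h : ∀ N : ℕ, p.eval (N : ℚ) = 0) : p = 0 := by
  apply eq_zero_of_infinite_isRoot
  apply Set.infinite_of_injective_forall_mem (f := fun N : ℕ => (N : ℚ))
    Nat.cast_injective
  intro N
  exact h N

lemma P1 (n : ℕ) :
    ∑ ij ∈ antidiagonal n, pc ij.1 * pc ij.2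
      = (pc n).comp (Polynomial.C 2 * Polynomial.X) := by
  rw [← sub_eq_zero]
  apply nat_roots_infinite
  intro N
  have hv : ((N + N).choose n : ℚ)
      = ∑ ij ∈ antidiagonal n, (N.choose ij.1 : ℚ) * N.choose ij.2 := by
    rw [Nat.add_choose_eq]
    push_cast
    rfl
  simp only [eval_sub, eval_finset_sum, eval_mul, eval_comp, eval_C, eval_X,
    pc_eval_nat, sub_eq_zero]
  rw [show (2 * (N:ℚ)) = ((N + N : ℕ) : ℚ) by push_cast; ring, pc_eval_nat, hv]

lemma P2 (n : ℕ) :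
    ∑ ij ∈ antidiagonal (2*n), Polynomial.C ((-1:ℚ))^ij.1 * (pc ij.1 * pc ij.2)
      = Polynomial.C ((-1:ℚ))^n * pc n := by
  rw [← sub_eq_zero]
  apply nat_roots_infinite
  intro N
  simp only [eval_sub, eval_finset_sum, eval_mul, eval_pow, eval_C, pc_eval_nat, sub_eq_zero]
  rw [← natP2 N n]
  apply Finset.sum_congr rfl
  intro ij _
  ring

/-- `Bq a` is the central binomial coefficient as a rational number. -/
def Bq (a : ℕ) : ℚ := a.centralBinom

lemma Vq (m : ℕ) : ∑ ij ∈ antidiagonal m, Bq ij.1 * Bq ij.2 = 4^m := by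
  have h := congrArg (Polynomial.eval (-(1/2) : ℚ)) (P1 m)
  simp only [eval_finset_sum, eval_mul, eval_comp, eval_C, eval_X, pc_eval_neg_half] at h
  rw [show (2 * (-(1/2)) : ℚ) = -1 by norm_num, pc_eval_neg_one] at h
  have hterm : ∀ ij ∈ antidiagonal m,
      (-1:ℚ)^ij.1 * ij.1.centralBinom/4^ij.1 * ((-1)^ij.2 * ij.2.centralBinom/4^ij.2)
        = ((-1:ℚ)^m/4^m) * (Bq ij.1 * Bq ij.2) := by
    intro ij hij
    have hab : ij.1 + ij.2 = m := Finset.HasAntidiagonal.mem_antidiagonal.mp hij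
    rw [← hab, pow_add, pow_add, Bq, Bq]
    have h4a : (4:ℚ)^ij.1 ≠ 0 := by positivity
    have h4b : (4:ℚ)^ij.2 ≠ 0 := by positivity
    field_simp
  rw [Finset.sum_congr rfl hterm, ← Finset.mul_sum] at h
  have h4 : (4:ℚ)^m ≠ 0 := by positivity
  have hne : ((-1:ℚ)^m / 4^m) ≠ 0 := by
    intro hzero
    rw [_root_.div_eq_zero_iff] at hzero
    rcases hzero with hz | hz
    · exact (by positivity : ((-1:ℚ)^m)^2 > 0).ne' (by rw [hz]; ring)
    · exact h4 hz
  have hrhs : ((-1:ℚ)^m) = ((-1:ℚ)^m/4^m) * 4^m := by field_simp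
  exact mul_left_cancel₀ hne (h.trans hrhs)

lemma Aq (n : ℕ) :
    ∑ ij ∈ antidiagonal (2*n), (-1:ℚ)^ij.1 * (Bq ij.1 * Bq ij.2) = 4^n * Bq n := by
  have h := congrArg (Polynomial.eval (-(1/2) : ℚ)) (P2 n)
  simp only [eval_finset_sum, eval_mul, eval_pow, eval_C, pc_eval_neg_half] at h
  have hterm : ∀ ij ∈ antidiagonal (2*n),
      (-1:ℚ)^ij.1 * ((-1:ℚ)^ij.1 * ij.1.centralBinom/4^ij.1 *
        ((-1)^ij.2 * ij.2.centralBinom/4^ij.2))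
        = ((1:ℚ)/16^n) * ((-1:ℚ)^ij.1 * (Bq ij.1 * Bq ij.2)) := by
    intro ij hij
    have hab : ij.1 + ij.2 = 2*n := Finset.HasAntidiagonal.mem_antidiagonal.mp hij
    have h16 : (16:ℚ)^n = 4^ij.1 * 4^ij.2 := by
      rw [← pow_add, hab, pow_mul]; norm_num
    have hpar : (-1:ℚ)^ij.1 * (-1:ℚ)^ij.2 = 1 := by
      rw [← pow_add, hab, pow_mul]; norm_num
    have hsq : (-1:ℚ)^ij.1 * (-1:ℚ)^ij.1 = 1 := by
      rw [← pow_add, ← two_mul, pow_mul]; norm_num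
    have hb : (-1:ℚ)^ij.2 = (-1:ℚ)^ij.1 := by
      calc (-1:ℚ)^ij.2 = ((-1:ℚ)^ij.1 * (-1:ℚ)^ij.1) * (-1:ℚ)^ij.2 := by rw [hsq, one_mul]
        _ = (-1:ℚ)^ij.1 * ((-1:ℚ)^ij.1 * (-1:ℚ)^ij.2) := by ring
        _ = (-1:ℚ)^ij.1 := by rw [hpar, mul_one]
    rw [hb, h16, Bq, Bq]
    have h4a : (4:ℚ)^ij.1 ≠ 0 := by positivity
    have h4b : (4:ℚ)^ij.2 ≠ 0 := by positivity
    field_simp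
    linear_combination (↑ij.1.centralBinom * ↑ij.2.centralBinom : ℚ) * hsq
  rw [Finset.sum_congr rfl hterm, ← Finset.mul_sum] at h
  have hrhs : (-1:ℚ)^n * ((-1:ℚ)^n * n.centralBinom / 4^n) = ((1:ℚ)/16^n) * (4^n * Bq n) := by
    have hsq : (-1:ℚ)^n * (-1:ℚ)^n = 1 := by
      rw [← pow_add, ← two_mul, pow_mul]; norm_num
    have h4 : (4:ℚ)^n ≠ 0 := by positivity
    have h16 : (16:ℚ)^n ≠ 0 := by positivity
    rw [Bq]
    have e2 : (4:ℚ)^n * 4^n = 16^n := by rw [← mul_pow]; norm_num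
    field_simp
    linear_combination (↑n.centralBinom * 16^n : ℚ) * hsq - (↑n.centralBinom : ℚ) * e2
  have hne : ((1:ℚ)/16^n) ≠ 0 := by positivity
  rw [hrhs] at h
  exact mul_left_cancel₀ hne h

lemma split_odd (f : ℕ → ℚ) (n : ℕ) :
    ∑ a ∈ range (2*n+1), f a
      = ∑ i ∈ range (n+1), f (2*i) + ∑ i ∈ range n, f (2*i+1) := by
  induction n with
  | zero => simp
  | succ n ih =>
      have e1 : 2*(n+1)+1 = (2*n+1) + 1 + 1 := by ring
      rw [e1, Finset.sum_range_succ, Finset.sum_range_succ, ih,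
        Finset.sum_range_succ (fun i => f (2*i)) (n+1),
        Finset.sum_range_succ (fun i => f (2*i+1)) n]
      have e2 : 2*(n+1) = 2*n+1+1 := by ring
      rw [e2]
      ring

lemma split_even (f : ℕ → ℚ) (n : ℕ) :
    ∑ a ∈ range (2*n+2), f a
      = ∑ i ∈ range (n+1), f (2*i) + ∑ i ∈ range (n+1), f (2*i+1) := by
  have e1 : 2*n+2 = (2*n+1) + 1 := by ring
  rw [e1, Finset.sum_range_succ, split_odd,
    Finset.sum_range_succ (fun i => f (2*i+1)) n]
  ring

lemma Vr (m : ℕ) : ∑ a ∈ range (m+1), Bq a * Bq (m - a) = 4^m := by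
  rw [← Vq m, Finset.Nat.sum_antidiagonal_eq_sum_range_succ_mk]

lemma Ar (n : ℕ) :
    ∑ a ∈ range (2*n+1), (-1:ℚ)^a * (Bq a * Bq (2*n - a)) = 4^n * Bq n := by
  rw [← Aq n, Finset.Nat.sum_antidiagonal_eq_sum_range_succ_mk]

lemma Ev (n : ℕ) :
    2 * ∑ i ∈ range (n+1), Bq (2*i) * Bq (2*n - 2*i) = 16^n + 4^n * Bq n := by
  have hV := Vr (2*n)
  rw [split_odd (fun a => Bq a * Bq (2*n - a)) n] at hV
  have hA := Ar n
  rw [split_odd (fun a => (-1:ℚ)^a * (Bq a * Bq (2*n - a))) n] at hA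
  have hsimpA : ∑ i ∈ range (n+1), (-1:ℚ)^(2*i) * (Bq (2*i) * Bq (2*n - 2*i))
      = ∑ i ∈ range (n+1), Bq (2*i) * Bq (2*n - 2*i) := by
    apply Finset.sum_congr rfl
    intro i _
    rw [pow_mul]
    norm_num
  have hsimpA2 : ∑ i ∈ range n, (-1:ℚ)^(2*i+1) * (Bq (2*i+1) * Bq (2*n - (2*i+1)))
      = -∑ i ∈ range n, Bq (2*i+1) * Bq (2*n - (2*i+1)) := by
    rw [← Finset.sum_neg_distrib]
    apply Finset.sum_congr rfl
    intro i _
    rw [pow_succ, pow_mul]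
    norm_num
  rw [hsimpA, hsimpA2] at hA
  have h16 : (4:ℚ)^(2*n) = 16^n := by rw [pow_mul]; norm_num
  rw [h16] at hV
  linarith [hV, hA]

lemma Mr (n : ℕ) :
    2 * ∑ i ∈ range (n+1), Bq (2*i+1) * Bq (2*n - 2*i) = 4 * 16^n := by
  have hV := Vr (2*n+1)
  rw [show 2*n+1+1 = 2*n+2 from rfl,
    split_even (fun a => Bq a * Bq (2*n+1 - a)) n] at hV
  have hrefl : ∑ i ∈ range (n+1), Bq (2*i) * Bq (2*n+1 - 2*i)
      = ∑ i ∈ range (n+1), Bq (2*(n-i)) * Bq (2*n+1 - 2*(n-i)) := by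
    have := Finset.sum_range_reflect (fun i => Bq (2*i) * Bq (2*n+1 - 2*i)) (n+1)
    simp only [Nat.add_sub_cancel] at this
    rw [← this]
  have hswap : ∑ i ∈ range (n+1), Bq (2*(n-i)) * Bq (2*n+1 - 2*(n-i))
      = ∑ i ∈ range (n+1), Bq (2*i+1) * Bq (2*n - 2*i) := by
    apply Finset.sum_congr rfl
    intro i hi
    have hin : i ≤ n := by
      have := Finset.mem_range.mp hi; omega
    have e1 : 2*n+1 - 2*(n-i) = 2*i+1 := by omega
    have e2 : 2*(n-i) = 2*n - 2*i := by omega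
    rw [e1, e2, mul_comm]
  have hmatch : ∑ i ∈ range (n+1), Bq (2*i+1) * Bq (2*n+1 - (2*i+1))
      = ∑ i ∈ range (n+1), Bq (2*i+1) * Bq (2*n - 2*i) := by
    apply Finset.sum_congr rfl
    intro i _
    congr 2
    omega
  rw [hrefl, hswap, hmatch] at hV
  have h4 : (4:ℚ)^(2*n+1) = 4 * 16^n := by
    rw [pow_succ, pow_mul]; norm_num; ring
  rw [h4] at hV
  linarith [hV]

lemma catalan_key (m : ℕ) :
    2 * catalan m + Nat.centralBinom (m+1) = 4 * Nat.centralBinom m := by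
  apply Nat.eq_of_mul_eq_mul_left (Nat.succ_pos m)
  have h1 := succ_mul_catalan_eq_centralBinom m
  have h2 := Nat.succ_mul_centralBinom_succ m
  calc (m+1) * (2 * catalan m + Nat.centralBinom (m+1))
      = 2*((m+1) * catalan m) + (m+1) * Nat.centralBinom (m+1) := by ring
    _ = 2*Nat.centralBinom m + 2*(2*m+1) * Nat.centralBinom m := by rw [h1, h2]
    _ = (m+1) * (4 * Nat.centralBinom m) := by ring

end CatalanConvAux

open CatalanConvAux in
/-- For every nonnegative integer `n`, `∑_{i+j=n} C_{2i} B_{2j} = 4^n B_n`, where `C_m` is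
the `m`-th Catalan number and `B_m = binom(2m, m)` is the `m`-th central binomial coefficient. -/
theorem catalan_centralBinom_convolution (n : ℕ) :
    ∑ ij ∈ Finset.HasAntidiagonal.antidiagonal n, catalan (2 * ij.1) * Nat.centralBinom (2 * ij.2) =
      4 ^ n * Nat.centralBinom n := by
  have key : ((∑ ij ∈ Finset.HasAntidiagonal.antidiagonal n,
      catalan (2 * ij.1) * Nat.centralBinom (2 * ij.2) : ℕ) : ℚ)
      = ((4 ^ n * Nat.centralBinom n : ℕ) : ℚ) := by
    rw [Finset.Nat.sum_antidiagonal_eq_sum_range_succ_mk]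
    push_cast
    have h4 : (4:ℚ) ≠ 0 := by norm_num
    apply mul_left_cancel₀ h4
    have hEv := Ev n
    have hM := Mr n
    have hstep : ∀ i ∈ range (n+1),
        4 * ((catalan (2*i) : ℚ) * (Nat.centralBinom (2*(n-i)) : ℚ))
          = 2*(4 * Bq (2*i) * Bq (2*n - 2*i)) - 2*(Bq (2*i+1) * Bq (2*n - 2*i)) := by
      intro i hi
      have hin : i ≤ n := by have := Finset.mem_range.mp hi; omega
      have harg : 2*(n-i) = 2*n - 2*i := by omega
      have hc : 2 * (catalan (2*i) : ℚ) + Bq (2*i+1) = 4 * Bq (2*i) := by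
        have := catalan_key (2*i)
        simp only [Bq]
        exact_mod_cast this
      rw [harg]
      show 4 * ((catalan (2*i) : ℚ) * Bq (2*n - 2*i)) = _
      linear_combination (2 * Bq (2*n - 2*i)) * hc
    rw [Finset.mul_sum, Finset.sum_congr rfl hstep, Finset.sum_sub_distrib,
      ← Finset.mul_sum, ← Finset.mul_sum]
    have e8 : ∑ i ∈ range (n+1), 4 * Bq (2*i) * Bq (2*n - 2*i)
        = 4 * ∑ i ∈ range (n+1), Bq (2*i) * Bq (2*n - 2*i) := by
      rw [Finset.mul_sum]
      apply Finset.sum_congr rfl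
      intro i _
      ring
    rw [e8]
    show _ = 4 * (4^n * Bq n)
    linarith [hEv, hM]
  exact_mod_cast key
end

section
/- For every nonnegative integer n, the sum over all pairs of nonnegative integers (i, j) with i + j = n of C_{2i} · B_{2j} equals (n + 1) times the sum over all pairs (i, j) with i + j = n of C_{2i} · C_{2j}. -/
/-- For every nonnegative integer `n`,
`∑_{i+j=n} C_{2i} B_{2j} = (n+1) ∑_{i+j=n} C_{2i} C_{2j}`. -/
theorem catalan_centralBinom_convolution_eq (n : ℕ) :
    ∑ ij ∈ Finset.HasAntidiagonal.antidiagonal n, catalan (2 * ij.1) * Nat.centralBinom (2 * ij.2) =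
      (n + 1) * ∑ ij ∈ Finset.HasAntidiagonal.antidiagonal n, catalan (2 * ij.1) * catalan (2 * ij.2) := by
  have hcb : ∀ m : ℕ, Nat.centralBinom m = (m + 1) * catalan m := fun m =>
    (succ_mul_catalan_eq_centralBinom m).symm
  have h2 : 2 * (∑ ij ∈ Finset.HasAntidiagonal.antidiagonal n,
        catalan (2 * ij.1) * Nat.centralBinom (2 * ij.2))
      = 2 * ((n + 1) * ∑ ij ∈ Finset.HasAntidiagonal.antidiagonal n,
        catalan (2 * ij.1) * catalan (2 * ij.2)) := by
    have hswap : ∑ ij ∈ Finset.HasAntidiagonal.antidiagonal n, catalan (2 * ij.1) * Nat.centralBinom (2 * ij.2)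
        = ∑ ij ∈ Finset.HasAntidiagonal.antidiagonal n, catalan (2 * ij.2) * Nat.centralBinom (2 * ij.1) := by
      rw [← Finset.Nat.sum_antidiagonal_swap
        (f := fun p : ℕ × ℕ => catalan (2 * p.1) * Nat.centralBinom (2 * p.2))]
      rfl
    calc 2 * (∑ ij ∈ Finset.HasAntidiagonal.antidiagonal n, catalan (2 * ij.1) * Nat.centralBinom (2 * ij.2))
        = (∑ ij ∈ Finset.HasAntidiagonal.antidiagonal n, catalan (2 * ij.1) * Nat.centralBinom (2 * ij.2))
          + ∑ ij ∈ Finset.HasAntidiagonal.antidiagonal n, catalan (2 * ij.2) * Nat.centralBinom (2 * ij.1) := by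
          rw [← hswap]; ring
      _ = ∑ ij ∈ Finset.HasAntidiagonal.antidiagonal n,
            (2 * (n + 1)) * (catalan (2 * ij.1) * catalan (2 * ij.2)) := by
          rw [← Finset.sum_add_distrib]
          refine Finset.sum_congr rfl fun ij hij => ?_
          have hn : ij.1 + ij.2 = n := Finset.HasAntidiagonal.mem_antidiagonal.mp hij
          rw [hcb, hcb, ← hn]; ring
      _ = 2 * ((n + 1) * ∑ ij ∈ Finset.HasAntidiagonal.antidiagonal n,
            catalan (2 * ij.1) * catalan (2 * ij.2)) := by
          rw [Finset.mul_sum, Finset.mul_sum]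
          exact Finset.sum_congr rfl fun ij _ => by ring
  exact Nat.eq_of_mul_eq_mul_left (by norm_num) h2
end

section
/- For every nonnegative integer n, the number of balanced 2n-paths that are even-zeroed equals C_{2n}, the (2n)-th Catalan number. -/
/-- A path of length `l` is a sequence of `l` steps, each `+1` (up, `true`) or `-1`
(down, `false`). `psum p k` is the partial sum of the first `k` steps of `p`
(the height of the path after `k` steps). -/
def psum {l : ℕ} (p : Fin l → Bool) (k : ℕ) : ℤ :=
  ∑ i ∈ Finset.univ.filter (fun i : Fin l => (i : ℕ) < k), (if p i then (1 : ℤ) else -1)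

/-- A path is even-zeroed if every index at which its partial sum is `0`
(i.e., every `x`-intercept) is divisible by `4`. -/
def IsEvenZeroed {l : ℕ} (p : Fin l → Bool) : Prop :=
  ∀ k ≤ l, psum p k = 0 → 4 ∣ k

/-- A path of length `2m` is balanced if its total sum of steps is `0`
(equivalently, it has `m` up-steps and `m` down-steps). -/
def IsBalanced {l : ℕ} (p : Fin l → Bool) : Prop :=
  psum p l = 0


open List

def S (l : List Bool) : ℤ := (l.map fun b => if b then (1:ℤ) else -1).sum

def Bal (l : List Bool) : Prop := S l = 0
def EZ (l : List Bool) : Prop := ∀ k ≤ l.length, S (l.take k) = 0 → 4 ∣ k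
def NN (l : List Bool) : Prop := ∀ k, 0 ≤ S (l.take k)
def Prim (l : List Bool) : Prop := Bal l ∧ ∀ k, 0 < k → k < l.length → S (l.take k) ≠ 0

@[simp] lemma S_nil : S [] = 0 := rfl
@[simp] lemma S_cons (b : Bool) (l : List Bool) : S (b :: l) = (if b then 1 else -1) + S l := by
  simp [S]
@[simp] lemma S_append (a b : List Bool) : S (a ++ b) = S a + S b := by
  simp [S]

lemma S_count (l : List Bool) : S l = (l.count true : ℤ) - l.count false := by
  induction l with
  | nil => simp
  | cons b t ih => cases b <;> simp [ih, count_cons] <;> ring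

lemma count_tf (l : List Bool) : l.count true + l.count false = l.length := by
  induction l with
  | nil => simp
  | cons b t ih => cases b <;> simp [count_cons] <;> omega

lemma S_take_of_le (l : List Bool) {k : ℕ} (h : l.length ≤ k) : S (l.take k) = S l := by
  rw [List.take_of_length_le h]

lemma even_of_S_take_zero {l : List Bool} {k : ℕ} (hk : k ≤ l.length)
    (h : S (l.take k) = 0) : 2 ∣ k := by
  have hc := S_count (l.take k)
  have hlen : (l.take k).length = k := by simp [hk]
  have hsum := count_tf (l.take k)
  rw [hlen] at hsum
  refine ⟨(l.take k).count true, ?_⟩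
  omega

lemma S_take_append_big (a b : List Bool) {k : ℕ} (h : a.length ≤ k) :
    S ((a ++ b).take k) = S a + S (b.take (k - a.length)) := by
  obtain ⟨i, rfl⟩ : ∃ i, k = a.length + i := ⟨k - a.length, by omega⟩
  rw [List.take_append, S_append]
  simp [List.take_of_length_le h]

lemma S_take_append_small (a b : List Bool) {k : ℕ} (h : k ≤ a.length) :
    S ((a ++ b).take k) = S (a.take k) := by
  rw [List.take_append_of_le_length h]

/-- step relation -/
lemma S_take_succ (l : List Bool) {k : ℕ} (h : k < l.length) :
    S (l.take (k + 1)) = S (l.take k) + (if l[k] then 1 else -1) := by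
  rw [List.take_succ, List.getElem?_eq_getElem h]
  simp only [Option.toList_some, S_append]
  simp [S]

lemma S_take_succ_abs (l : List Bool) {k : ℕ} (h : k < l.length) :
    S (l.take k) - 1 ≤ S (l.take (k+1)) ∧ S (l.take (k+1)) ≤ S (l.take k) + 1 := by
  rw [S_take_succ l h]; split <;> omega

/-- EZ of a concatenation -/
lemma ez_append {a b : List Bool} (ha : Bal a) (hea : EZ a) (heb : EZ b) : EZ (a ++ b) := by
  intro k hk hz
  rcases le_or_gt k a.length with h | h
  · exact hea k h (by rwa [S_take_append_small a b h] at hz)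
  · have h4a : 4 ∣ a.length := hea a.length le_rfl (by rw [List.take_length]; exact ha)
    rw [S_take_append_big a b h.le, ha, zero_add] at hz
    have := heb (k - a.length) (by simp at hk; omega) hz
    omega

lemma ez_append_right {a b : List Bool} (ha : Bal a) (h4 : 4 ∣ a.length)
    (h : EZ (a ++ b)) : EZ b := by
  intro k hk hz
  have := h (a.length + k) (by simp; omega) (by
    rw [S_take_append_big a b (by omega), ha, zero_add]
    simpa using hz)
  omega

lemma ez_of_prim {a : List Bool} (hp : Prim a) (h4 : 4 ∣ a.length) : EZ a := by
  intro k hk hz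
  rcases Nat.eq_zero_or_pos k with rfl | h0
  · simp
  rcases eq_or_lt_of_le hk with rfl | hlt
  · exact h4
  · exact absurd hz (hp.2 k h0 hlt)

open Classical in
/-- position of the first return to zero -/
noncomputable def fz (l : List Bool) : ℕ :=
  if h : ∃ k, 0 < k ∧ S (l.take k) = 0 then Nat.find h else 0

lemma fz_exists {l : List Bool} (hb : Bal l) (hl : 0 < l.length) :
    ∃ k, 0 < k ∧ S (l.take k) = 0 :=
  ⟨l.length, hl, by rw [List.take_length]; exact hb⟩

lemma fz_spec {l : List Bool} (h : ∃ k, 0 < k ∧ S (l.take k) = 0) :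
    0 < fz l ∧ S (l.take (fz l)) = 0 := by
  rw [fz, dif_pos h]; exact Nat.find_spec h

lemma fz_min {l : List Bool} (h : ∃ k, 0 < k ∧ S (l.take k) = 0) {k : ℕ}
    (hk : k < fz l) : ¬(0 < k ∧ S (l.take k) = 0) := by
  rw [fz, dif_pos h] at hk; exact Nat.find_min h hk

lemma fz_le {l : List Bool} (hb : Bal l) (hl : 0 < l.length) : fz l ≤ l.length := by
  by_contra hc
  exact (fz_min (fz_exists hb hl) (lt_of_not_ge hc)) ⟨hl, by rw [List.take_length]; exact hb⟩

lemma fz_append_prim {a : List Bool} (b : List Bool) (hp : Prim a) (ha : 0 < a.length) :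
    fz (a ++ b) = a.length := by
  have hex : ∃ k, 0 < k ∧ S ((a ++ b).take k) = 0 :=
    ⟨a.length, ha, by rw [List.take_left']; exact hp.1; rfl⟩
  rw [fz, dif_pos hex]
  rw [Nat.find_eq_iff]
  refine ⟨⟨ha, by rw [List.take_left']; exact hp.1; rfl⟩, fun k hk => ?_⟩
  rintro ⟨h0, hz⟩
  rw [S_take_append_small a b hk.le] at hz
  exact hp.2 k h0 hk hz

/-- negation of a path -/
def negP (l : List Bool) : List Bool := l.map not

@[simp] lemma negP_negP (l : List Bool) : negP (negP l) = l := by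
  simp [negP, Function.comp_def]

@[simp] lemma negP_length (l : List Bool) : (negP l).length = l.length := by simp [negP]

@[simp] lemma S_negP (l : List Bool) : S (negP l) = -S l := by
  induction l with
  | nil => simp [negP]
  | cons b t ih => cases b <;> simp [negP, S, Function.comp_def] at * <;> omega

@[simp] lemma negP_take (l : List Bool) (k : ℕ) : negP (l.take k) = (negP l).take k := by
  simp [negP, List.map_take]

lemma prim_negP {l : List Bool} (h : Prim l) : Prim (negP l) := by
  refine ⟨by unfold Bal at *; rw [S_negP, h.1, neg_zero], fun k h0 hk hz => ?_⟩
  rw [← negP_take, S_negP, neg_eq_zero] at hz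
  exact h.2 k h0 (by simpa using hk) hz

/-- paths strictly above the axis in the interior -/
def Pos (l : List Bool) : Prop := Bal l ∧ ∀ k, 0 < k → k < l.length → 1 ≤ S (l.take k)

lemma pos_of_prim_head {l : List Bool} (h : Prim l) (hh : l.headI = true) : Pos l := by
  refine ⟨h.1, fun k h0 => ?_⟩
  induction k with
  | zero => omega
  | succ k ih =>
    intro hk
    rcases Nat.eq_zero_or_pos k with rfl | hk0
    · -- S (take 1 l) = 1 since head is true
      rcases l with _ | ⟨b, t⟩
      · simp at hk
      · simp at hh; subst hh; simp [S]
    · have h1 : 1 ≤ S (l.take k) := ih hk0 (by omega)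
      have h2 := S_take_succ_abs l (by omega : k < l.length)
      have h3 := h.2 (k+1) (by omega) hk
      omega

lemma headI_of_pos {l : List Bool} (h : Pos l) (hl : 2 ≤ l.length) : l.headI = true := by
  have h1 : 1 ≤ S (l.take 1) := h.2 1 one_pos (by omega)
  rcases l with _ | ⟨b, t⟩
  · simp at hl
  · cases b
    · simp [S] at h1
    · rfl

lemma prim_headI_cases {l : List Bool} (h : Prim l) (hl : 2 ≤ l.length) :
    (l.headI = true ∧ Pos l) ∨ (l.headI = false ∧ Pos (negP l)) := by
  cases hh : l.headI
  · right
    refine ⟨rfl, pos_of_prim_head (prim_negP h) ?_⟩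
    rcases l with _ | ⟨b, t⟩
    · simp at hl
    · simp at hh; simp [negP, hh]
  · left; exact ⟨rfl, pos_of_prim_head h hh⟩

lemma S_take_cons (b : Bool) (l : List Bool) (k : ℕ) :
    S ((b :: l).take (k+1)) = (if b then 1 else -1) + S (l.take k) := by
  rw [List.take_succ_cons, S_cons]

lemma pos_eq {l : List Bool} (h : Pos l) (hl : 2 ≤ l.length) :
    l = true :: (l.tail.dropLast ++ [false]) := by
  rcases l with _ | ⟨b, t⟩
  · simp at hl
  have hb : b = true := headI_of_pos h hl
  subst hb
  have ht : t ≠ [] := by rintro rfl; simp at hl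
  have hlast : t.getLast ht = false := by
    have h1 : 1 ≤ S ((true :: t).take ((true :: t).length - 1)) :=
      h.2 _ (by simp; exact List.length_pos_iff.mpr ht) (by simp)
    have h2 := S_take_succ (true :: t) (show (true :: t).length - 1 < (true :: t).length by simp)
    rw [show (true :: t).length - 1 + 1 = (true :: t).length by simp, List.take_length] at h2
    have h3 : S (true :: t) = 0 := h.1
    have h4 : (true :: t).getLast (by simp) = (true :: t)[(true :: t).length - 1] :=
      List.getLast_eq_getElem (l := true :: t) _
    rw [List.getLast_cons ht] at h4
    rw [h4]
    by_contra hc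
    simp only [Bool.not_eq_false] at hc
    rw [hc, if_pos rfl] at h2
    omega
  conv_lhs => rw [← List.dropLast_append_getLast ht]
  simp [hlast]

lemma bal_mid {u : List Bool} (h : Bal (true :: (u ++ [false]))) : Bal u := by
  simp [Bal, S] at *; omega

lemma nn_mid {u : List Bool} (h : Pos (true :: (u ++ [false]))) : NN u := by
  intro k
  rcases le_or_gt u.length k with hk | hk
  · rw [S_take_of_le u hk]; rw [(bal_mid h.1 : S u = 0)]
  · have h2 := h.2 (k+1) (by omega) (by simp; omega)
    rw [S_take_cons, if_pos rfl, S_take_append_small u [false] hk.le] at h2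
    omega

lemma pos_rebuild {u : List Bool} (hb : Bal u) (hn : NN u) : Pos (true :: (u ++ [false])) := by
  constructor
  · simp [Bal, S] at *; omega
  · intro k h0 hk
    simp at hk
    obtain ⟨k, rfl⟩ : ∃ j, k = j + 1 := ⟨k - 1, by omega⟩
    rw [S_take_cons, if_pos rfl]
    rcases le_or_gt k u.length with hk2 | hk2
    · rw [S_take_append_small u [false] hk2]
      have := hn k; omega
    · omega

open DyckStep in
def toD : Bool → DyckStep := fun b => if b then U else D
open DyckStep in
def fromD : DyckStep → Bool := fun s => s = U

open DyckStep in
@[simp] lemma fromD_toD (b : Bool) : fromD (toD b) = b := by cases b <;> simp [toD, fromD]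
open DyckStep in
@[simp] lemma toD_fromD (s : DyckStep) : toD (fromD s) = s := by cases s <;> simp [toD, fromD]

open DyckStep in
lemma count_toD_U (w : List Bool) : (w.map toD).count U = w.count true := by
  induction w with
  | nil => rfl
  | cons b t ih => cases b <;> simp [toD, List.count_cons, ih]

open DyckStep in
lemma count_toD_D (w : List Bool) : (w.map toD).count D = w.count false := by
  induction w with
  | nil => rfl
  | cons b t ih => cases b <;> simp [toD, List.count_cons, ih]

lemma bal_iff_count (w : List Bool) : Bal w ↔ w.count true = w.count false := by
  rw [Bal, S_count]; omega

open DyckStep in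
/-- Bool-list Dyck paths of semilength t are equivalent to Mathlib Dyck words. -/
noncomputable def dyckEquiv (t : ℕ) :
    {w : List Bool // w.length = 2 * t ∧ Bal w ∧ NN w} ≃ {p : DyckWord // p.semilength = t} where
  toFun w := ⟨⟨w.1.map toD, by
      rw [count_toD_U, count_toD_D]; exact (bal_iff_count w.1).mp w.2.2.1, by
      intro i
      rw [← List.map_take, count_toD_U, count_toD_D]
      have h := w.2.2.2 i
      rw [S_count] at h
      omega⟩, by
      have : (w.1.map toD).count U = w.1.count true := count_toD_U w.1
      have hc := (bal_iff_count w.1).mp w.2.2.1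
      have hs := count_tf w.1
      have hl : w.1.length = 2 * t := w.2.1
      simp only [DyckWord.semilength]
      omega⟩
  invFun p := ⟨p.1.toList.map fromD, by
      have := p.1.two_mul_semilength_eq_length
      simp [p.2] at this
      simp [← this], by
      constructor
      · rw [bal_iff_count]
        have h1 : (p.1.toList.map fromD).count true = p.1.toList.count U := by
          rw [← count_toD_U, List.map_map]
          simp [Function.comp_def]
        have h2 : (p.1.toList.map fromD).count false = p.1.toList.count D := by
          rw [← count_toD_D, List.map_map]
          simp [Function.comp_def]
        rw [h1, h2, p.1.count_U_eq_count_D]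
      · intro k
        rw [S_count]
        have h1 : ((p.1.toList.map fromD).take k).count true = (p.1.toList.take k).count U := by
          rw [← List.map_take, ← count_toD_U, List.map_map]
          simp [Function.comp_def]
        have h2 : ((p.1.toList.map fromD).take k).count false = (p.1.toList.take k).count D := by
          rw [← List.map_take, ← count_toD_D, List.map_map]
          simp [Function.comp_def]
        have := p.1.count_D_le_count_U k
        omega⟩
  left_inv w := by
    ext1
    simp [List.map_map, Function.comp_def]
  right_inv p := by
    ext1
    ext1
    simp [List.map_map, Function.comp_def]

instance pathSetFinite (L : ℕ) (P : List Bool → Prop) :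
    Finite {w : List Bool // w.length = L ∧ P w} :=
  Finite.of_injective
    (fun x => (Equiv.vectorEquivFin Bool L) ⟨x.1, x.2.1⟩)
    (fun a b h => by
      have h2 := (Equiv.vectorEquivFin Bool L).injective h
      have h3 : a.1 = b.1 := congrArg (fun v : List.Vector Bool L => v.1) h2
      exact Subtype.ext h3)

lemma Dy_eq (t : ℕ) :
    Nat.card {w : List Bool // w.length = 2 * t ∧ Bal w ∧ NN w} = catalan t := by
  rw [Nat.card_congr (dyckEquiv t), Nat.card_eq_fintype_card,
    DyckWord.card_dyckWord_semilength_eq_catalan]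

lemma prim_of_pos {l : List Bool} (h : Pos l) : Prim l :=
  ⟨h.1, fun k h0 hk hz => by have := h.2 k h0 hk; omega⟩

lemma pos_negP_of_prim_false {l : List Bool} (h : Prim l) (hl : 2 ≤ l.length)
    (hh : l.headI = false) : Pos (negP l) := by
  rcases prim_headI_cases h hl with ⟨h1, _⟩ | ⟨_, h2⟩
  · rw [h1] at hh; exact absurd hh (by simp)
  · exact h2

lemma negP_headI {l : List Bool} (hl : l ≠ []) : (negP l).headI = !l.headI := by
  rcases l with _ | ⟨b, t⟩
  · simp at hl
  · rfl

noncomputable def primEquiv (L : ℕ) (hL : 2 ≤ L) :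
    {w : List Bool // w.length = L ∧ Prim w} ≃ Bool × {w : List Bool // w.length = L ∧ Pos w} where
  toFun w := (w.1.headI, ⟨if w.1.headI = true then w.1 else negP w.1, by
    have hlen : 2 ≤ w.1.length := by rw [w.2.1]; exact hL
    rcases prim_headI_cases w.2.2 hlen with ⟨h, hp⟩ | ⟨h, hp⟩ <;> simp [h, w.2.1, hp]⟩)
  invFun x := ⟨if x.1 then x.2.1 else negP x.2.1, by
    cases hx : x.1 <;>
      simp [hx, x.2.2.1, prim_of_pos x.2.2.2, prim_negP (prim_of_pos x.2.2.2)]⟩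
  left_inv w := by
    have hlen : 2 ≤ w.1.length := by rw [w.2.1]; exact hL
    ext1
    cases hh : w.1.headI <;> simp [hh]
  right_inv x := by
    have hlen : 2 ≤ x.2.1.length := by rw [x.2.2.1]; exact hL
    have hne : x.2.1 ≠ [] := by rw [← List.length_pos_iff]; omega
    have hh : x.2.1.headI = true := headI_of_pos x.2.2.2 hlen
    cases hx : x.1 with
    | true =>
      ext1
      · simp [hx, hh]
      · simp [hx, hh]
    | false =>
      have : (negP x.2.1).headI = false := by rw [negP_headI hne, hh]; rfl
      ext1
      · simp [hx, this]
      · simp [hx, this]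

noncomputable def posEquiv (t : ℕ) :
    {w : List Bool // w.length = 2 * (t + 1) ∧ Pos w} ≃
      {u : List Bool // u.length = 2 * t ∧ Bal u ∧ NN u} where
  toFun w := ⟨w.1.tail.dropLast, by
    have hlen : w.1.length = 2 * (t + 1) := w.2.1
    have heq := pos_eq w.2.2 (by omega)
    refine ⟨by simp; omega, ?_, ?_⟩
    · exact bal_mid (heq ▸ w.2.2.1)
    · exact nn_mid (heq ▸ w.2.2)⟩
  invFun u := ⟨true :: (u.1 ++ [false]), by
    refine ⟨by simp [u.2.1]; omega, pos_rebuild u.2.2.1 u.2.2.2⟩⟩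
  left_inv w := by
    have hlen : w.1.length = 2 * (t + 1) := w.2.1
    exact Subtype.ext (pos_eq w.2.2 (by omega)).symm
  right_inv u := by
    ext1
    simp [List.dropLast_concat]

lemma Pa_eq (t : ℕ) :
    Nat.card {w : List Bool // w.length = 2 * (t + 1) ∧ Prim w} = 2 * catalan t := by
  rw [Nat.card_congr (primEquiv (2 * (t + 1)) (by omega)), Nat.card_prod,
    Nat.card_congr (posEquiv t), Dy_eq]
  simp [Nat.card_eq_fintype_card]

noncomputable def EZB (m : ℕ) : ℕ :=
  Nat.card {w : List Bool // w.length = 2 * m ∧ Bal w ∧ EZ w}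

noncomputable def fiberEquiv (m j : ℕ) (hj : j ≤ m) :
    {x : {w : List Bool // w.length = 2 * (m + 1) ∧ Bal w ∧ EZ w} // fz x.1 = 2 * (j + 1)} ≃
      PLift (4 ∣ 2 * (j + 1)) × {a : List Bool // a.length = 2 * (j + 1) ∧ Prim a} ×
        {b : List Bool // b.length = 2 * (m - j) ∧ Bal b ∧ EZ b} where
  toFun x := by
    obtain ⟨⟨l, hlen, hb, he⟩, ht⟩ := x
    simp only at ht
    have hpos : 0 < l.length := by omega
    have hex := fz_exists hb hpos
    have hzt : S (l.take (2 * (j + 1))) = 0 := by rw [← ht]; exact (fz_spec hex).2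
    have ht_le : 2 * (j + 1) ≤ l.length := by rw [← ht]; exact fz_le hb hpos
    have hbala : Bal (l.take (2 * (j + 1))) := hzt
    have h4 : 4 ∣ 2 * (j + 1) := he _ ht_le hzt
    refine ⟨⟨h4⟩, ⟨l.take (2 * (j + 1)), ?_, hbala, ?_⟩, ⟨l.drop (2 * (j + 1)), ?_, ?_, ?_⟩⟩
    · rw [List.length_take]; omega
    · intro k h0 hk hz
      rw [List.length_take] at hk
      rw [List.take_take] at hz
      have hk' : k < 2 * (j + 1) := by omega
      rw [min_eq_left hk'.le] at hz
      exact fz_min hex (by omega) ⟨h0, hz⟩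
    · rw [List.length_drop]; omega
    · have := S_append (l.take (2 * (j + 1))) (l.drop (2 * (j + 1)))
      rw [List.take_append_drop] at this
      have hb' : S l = 0 := hb
      unfold Bal at *
      omega
    · refine ez_append_right hbala ?_ ?_
      · rw [List.length_take]; omega
      · rw [List.take_append_drop]; exact he
  invFun x := by
    obtain ⟨⟨h4⟩, ⟨a, hla, hpa⟩, ⟨b, hlb, hbb, heb⟩⟩ := x
    have h4a : 4 ∣ a.length := by rw [hla]; exact h4
    refine ⟨⟨a ++ b, ?_, ?_, ?_⟩, ?_⟩
    · rw [List.length_append]; omega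
    · show S (a ++ b) = 0
      rw [S_append, hpa.1, hbb, add_zero]
    · exact ez_append hpa.1 (ez_of_prim hpa h4a) heb
    · simp only
      rw [fz_append_prim b hpa (by omega)]
      omega
  left_inv x := by
    obtain ⟨⟨l, hlen, hb, he⟩, ht⟩ := x
    exact Subtype.ext (Subtype.ext (List.take_append_drop _ l))
  right_inv x := by
    obtain ⟨⟨h4⟩, ⟨a, hla, hpa⟩, ⟨b, hlb, hbb, heb⟩⟩ := x
    refine Prod.ext rfl (Prod.ext ?_ ?_)
    · exact Subtype.ext (List.take_left' hla)
    · exact Subtype.ext (List.drop_left' hla)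

open Classical in
lemma nat_card_plift (p : Prop) : Nat.card (PLift p) = if p then 1 else 0 := by
  by_cases h : p
  · haveI : Unique (PLift p) := ⟨⟨⟨h⟩⟩, fun x => rfl⟩
    simp [Nat.card_unique, h]
  · haveI : IsEmpty (PLift p) := ⟨fun x => h x.down⟩
    simp [Nat.card_of_isEmpty, h]

lemma nat_card_sigma {N : ℕ} (A : Fin N → Type*) [∀ j, Finite (A j)] :
    Nat.card (Σ j, A j) = ∑ j, Nat.card (A j) := by
  haveI := fun j => Fintype.ofFinite (A j)
  simp [Nat.card_eq_fintype_card]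

lemma fz_facts {l : List Bool} (hb : Bal l) (hl : 0 < l.length) :
    2 ∣ fz l ∧ 0 < fz l ∧ fz l ≤ l.length := by
  have hex := fz_exists hb hl
  have h1 := fz_spec hex
  have h2 := fz_le hb hl
  exact ⟨even_of_S_take_zero h2 h1.2, h1.1, h2⟩

lemma EZB_rec (m : ℕ) :
    EZB (m + 1) = ∑ j ∈ Finset.range (m + 1),
      (if 4 ∣ 2 * (j + 1) then 1 else 0) * (2 * catalan j * EZB (m - j)) := by
  classical
  set T := {w : List Bool // w.length = 2 * (m + 1) ∧ Bal w ∧ EZ w} with hT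
  have hfact : ∀ w : T, 2 ∣ fz w.1 ∧ 0 < fz w.1 ∧ fz w.1 ≤ 2 * (m + 1) := by
    intro w
    have := fz_facts w.2.2.1 (by rw [w.2.1]; omega)
    rw [w.2.1] at this
    exact this
  set f : T → Fin (m + 1) := fun w => ⟨fz w.1 / 2 - 1, by have := hfact w; omega⟩ with hf
  have key : ∀ j : Fin (m + 1), Nat.card {w : T // f w = j} =
      (if 4 ∣ 2 * ((j : ℕ) + 1) then 1 else 0) * (2 * catalan j * EZB (m - j)) := by
    intro j
    have hiff : ∀ w : T, f w = j ↔ fz w.1 = 2 * ((j : ℕ) + 1) := by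
      intro w
      have hw := hfact w
      rw [hf, Fin.ext_iff]
      simp only
      omega
    rw [Nat.card_congr (Equiv.subtypeEquivRight hiff),
      Nat.card_congr (fiberEquiv m j (by omega)),
      Nat.card_prod, Nat.card_prod, nat_card_plift, Pa_eq]
    rw [show Nat.card {b : List Bool // b.length = 2 * (m - (j : ℕ)) ∧ Bal b ∧ EZ b} = EZB (m - j) from rfl]
    by_cases h : 4 ∣ 2 * ((j : ℕ) + 1) <;> simp [h]
  calc EZB (m + 1) = Nat.card T := rfl
    _ = Nat.card (Σ j : Fin (m + 1), {w : T // f w = j}) :=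
        Nat.card_congr (Equiv.sigmaFiberEquiv f).symm
    _ = ∑ j : Fin (m + 1), Nat.card {w : T // f w = j} := nat_card_sigma _
    _ = ∑ j : Fin (m + 1), (if 4 ∣ 2 * ((j : ℕ) + 1) then 1 else 0) *
          (2 * catalan j * EZB (m - j)) := by
        exact Finset.sum_congr rfl fun j _ => key j
    _ = _ := Fin.sum_univ_eq_sum_range (fun j => (if 4 ∣ 2 * (j + 1) then 1 else 0) * (2 * catalan j * EZB (m - j))) (m + 1)

lemma EZB_zero : EZB 0 = 1 := by
  haveI : Unique {w : List Bool // w.length = 2 * 0 ∧ Bal w ∧ EZ w} := by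
    refine ⟨⟨⟨[], by simp, rfl, fun k hk hz => by simp at hk; omega⟩⟩, ?_⟩
    rintro ⟨w, hw, -⟩
    exact Subtype.ext (List.length_eq_zero_iff.mp (by simpa using hw))
  rw [EZB, Nat.card_unique]

lemma catalan_identity (n : ℕ) :
    catalan (2 * n + 2) = ∑ j ∈ Finset.range (2 * n + 2),
      (if 4 ∣ 2 * (j + 1) then 1 else 0) * (2 * catalan j * catalan (2 * n + 1 - j)) := by
  classical
  set N := 2 * n + 1 with hN
  have h1 : catalan (N + 1) = ∑ i ∈ Finset.range (N + 1), catalan i * catalan (N - i) := by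
    rw [catalan_succ]
    exact Fin.sum_univ_eq_sum_range (fun i => catalan i * catalan (N - i)) (N + 1)
  have hsplit := Finset.sum_filter_add_sum_filter_not (Finset.range (N + 1)) (fun i => Odd i)
    (fun i => catalan i * catalan (N - i))
  have hswap : ∑ i ∈ (Finset.range (N + 1)).filter (fun i => ¬ Odd i),
      catalan i * catalan (N - i)
      = ∑ i ∈ (Finset.range (N + 1)).filter (fun i => Odd i), catalan i * catalan (N - i) := by
    refine Finset.sum_nbij' (fun i => N - i) (fun i => N - i) ?_ ?_ ?_ ?_ ?_
    · intro i hi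
      simp only [Finset.mem_filter, Finset.mem_range, Nat.odd_iff] at *
      omega
    · intro i hi
      simp only [Finset.mem_filter, Finset.mem_range, Nat.odd_iff] at *
      omega
    · intro i hi
      simp only [Finset.mem_filter, Finset.mem_range] at hi
      show N - (N - i) = i
      omega
    · intro i hi
      simp only [Finset.mem_filter, Finset.mem_range] at hi
      show N - (N - i) = i
      omega
    · intro i hi
      simp only [Finset.mem_filter, Finset.mem_range] at hi
      rw [show N - (N - i) = i by omega, Nat.mul_comm]
  have h2 : ∑ i ∈ Finset.range (N + 1), catalan i * catalan (N - i)
      = 2 * ∑ i ∈ (Finset.range (N + 1)).filter (fun i => Odd i),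
          catalan i * catalan (N - i) := by
    rw [← hsplit, hswap]; ring
  have h3 : ∑ j ∈ Finset.range (N + 1),
      (if 4 ∣ 2 * (j + 1) then 1 else 0) * (2 * catalan j * catalan (N - j))
      = 2 * ∑ i ∈ (Finset.range (N + 1)).filter (fun i => Odd i),
          catalan i * catalan (N - i) := by
    rw [Finset.mul_sum, Finset.sum_filter]
    refine Finset.sum_congr rfl fun j hj => ?_
    have : (4 ∣ 2 * (j + 1)) ↔ Odd j := by rw [Nat.odd_iff]; omega
    by_cases h : Odd j
    · rw [if_pos (this.mpr h), if_pos h]; ring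
    · rw [if_neg (fun hc => h (this.mp hc)), if_neg h]
      simp
  rw [show 2 * n + 2 = N + 1 by omega, h1, h2, ← h3]

lemma EZB_even (n : ℕ) : EZB (2 * n) = catalan (2 * n) := by
  induction n using Nat.strong_induction_on with
  | _ n ih =>
    match n with
    | 0 => simp [EZB_zero]
    | (k + 1) =>
      rw [show 2 * (k + 1) = (2 * k + 1) + 1 by omega, EZB_rec, catalan_identity k]
      refine Finset.sum_congr rfl fun j hj => ?_
      simp only [Finset.mem_range] at hj
      by_cases h : 4 ∣ 2 * (j + 1)
      · rw [if_pos h]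
        have hodd : j % 2 = 1 := by omega
        have hrw : 2 * k + 1 - j = 2 * ((2 * k + 1 - j) / 2) := by omega
        rw [hrw, ih ((2 * k + 1 - j) / 2) (by omega)]
      · rw [if_neg h]
        simp

lemma psum_eq {L : ℕ} (p : Fin L → Bool) (k : ℕ) :
    psum p k = S ((List.ofFn p).take k) := by
  induction k with
  | zero => simp [psum, S]
  | succ k ih =>
    rcases lt_or_ge k L with hk | hk
    · have h1 : S ((List.ofFn p).take (k+1)) = S ((List.ofFn p).take k)
          + (if p ⟨k, hk⟩ then 1 else -1) := by
        rw [S_take_succ _ (by simpa using hk)]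
        congr 2
        simp
      have h2 : (Finset.univ.filter (fun i : Fin L => (i : ℕ) < k + 1))
          = insert ⟨k, hk⟩ (Finset.univ.filter (fun i : Fin L => (i : ℕ) < k)) := by
        ext i
        simp [Fin.ext_iff]
        omega
      rw [psum, h2, Finset.sum_insert (by simp), h1, ← ih, psum]
      ring
    · have h2 : (Finset.univ.filter (fun i : Fin L => (i : ℕ) < k + 1))
          = (Finset.univ.filter (fun i : Fin L => (i : ℕ) < k)) := by
        ext i
        have := i.isLt
        simp
        omega
      have h3 : (List.ofFn p).take (k+1) = (List.ofFn p).take k := by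
        rw [List.take_of_length_le (by simp; omega),
          List.take_of_length_le (by simpa using hk)]
      rw [psum, h2, h3, ← ih, psum]


lemma bal_iff {L : ℕ} (p : Fin L → Bool) : IsBalanced p ↔ Bal (List.ofFn p) := by
  rw [IsBalanced, psum_eq, Bal, List.take_of_length_le (by simp)]

lemma ez_iff {L : ℕ} (p : Fin L → Bool) : IsEvenZeroed p ↔ EZ (List.ofFn p) := by
  constructor
  · intro h k hk hz
    exact h k (by simpa using hk) (by rw [psum_eq]; exact hz)
  · intro h k hk hz
    exact h k (by simpa using hk) (by rw [← psum_eq]; exact hz)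

noncomputable def topEquiv (L : ℕ) :
    {p : Fin L → Bool // IsBalanced p ∧ IsEvenZeroed p} ≃
      {w : List Bool // w.length = L ∧ Bal w ∧ EZ w} where
  toFun p := ⟨List.ofFn p.1, by simp, (bal_iff p.1).mp p.2.1, (ez_iff p.1).mp p.2.2⟩
  invFun w := by
    refine ⟨fun i => w.1[(i : ℕ)]'(by rw [w.2.1]; exact i.isLt), ?_, ?_⟩
    all_goals
      have hofn : List.ofFn (fun i : Fin L => w.1[(i : ℕ)]'(by rw [w.2.1]; exact i.isLt))
          = w.1 := by
        refine List.ext_getElem (by simp [w.2.1]) (fun i h1 h2 => by simp)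
    · exact (bal_iff _).mpr (by rw [hofn]; exact w.2.2.1)
    · exact (ez_iff _).mpr (by rw [hofn]; exact w.2.2.2)
  left_inv p := Subtype.ext (funext fun i => by simp)
  right_inv w := Subtype.ext (by
    refine List.ext_getElem (by simp [w.2.1]) (fun i h1 h2 => by simp))

/-- For every nonnegative integer `n`, the number of even-zeroed balanced `2n`-paths
(balanced paths of length `2·(2n)`) equals `C_{2n}`, the `(2n)`-th Catalan number. -/
theorem card_evenZeroed_balanced (n : ℕ) :
    Nat.card {p : Fin (2 * (2 * n)) → Bool // IsBalanced p ∧ IsEvenZeroed p} =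
      catalan (2 * n) := by
  rw [Nat.card_congr (topEquiv (2 * (2 * n)))]
  exact EZB_even n
end

section
/- For every nonnegative integer n, 2 times the sum over all triples of nonnegative integers (i, j, k) with i + j + k = n of C_{2i} · C_{2j} · B_{2k} equals B_{2n+1}. -/
open Finset PowerSeries


-- parity split of a range sum
lemma sum_range_even_odd {M : Type*} [AddCommMonoid M] (g : ℕ → M) (N : ℕ) :
    ∑ k ∈ range (2 * N), g k = ∑ i ∈ range N, g (2 * i) + ∑ i ∈ range N, g (2 * i + 1) := by
  induction N with
  | zero => simp
  | succ N ih =>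
    have : 2 * (N + 1) = (2 * N) + 1 + 1 := by ring
    rw [this, sum_range_succ, sum_range_succ, ih, sum_range_succ, sum_range_succ]
    abel

lemma catalan_even_succ (m : ℕ) :
    catalan (2 * m + 2) =
      2 * ∑ ij ∈ antidiagonal m, catalan (2 * ij.1) * catalan (2 * ij.2 + 1) := by
  have h := catalan_succ' (2 * m + 1)
  rw [Finset.Nat.sum_antidiagonal_eq_sum_range_succ_mk] at h
  have h2 : (2 * m + 1) + 1 = 2 * (m + 1) := by ring
  simp only [Nat.succ_eq_add_one, Prod.fst, Prod.snd] at h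
  rw [h2, sum_range_even_odd] at h
  rw [Finset.Nat.sum_antidiagonal_eq_sum_range_succ_mk]
  have e1 : ∑ i ∈ range (m+1), catalan (2*i) * catalan (2*m+1 - 2*i)
      = ∑ i ∈ range (m+1), catalan (2*i) * catalan (2*(m-i) + 1) := by
    refine sum_congr rfl fun i hi => ?_
    have : i ≤ m := by simpa [Nat.lt_succ_iff] using hi
    congr 1
    congr 1
    omega
  have e2 : ∑ i ∈ range (m+1), catalan (2*i+1) * catalan (2*m+1 - (2*i+1))
      = ∑ i ∈ range (m+1), catalan (2*(m-i)) * catalan (2*i + 1) := by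
    refine sum_congr rfl fun i hi => ?_
    have : i ≤ m := by simpa [Nat.lt_succ_iff] using hi
    rw [mul_comm]
    congr 2
    omega
  have e3 : ∑ i ∈ range (m+1), catalan (2*(m-i)) * catalan (2*i + 1)
      = ∑ i ∈ range (m+1), catalan (2*i) * catalan (2*(m-i) + 1) := by
    rw [← sum_range_reflect]
    refine sum_congr rfl fun i hi => ?_
    have : i ≤ m := by simpa [Nat.lt_succ_iff] using hi
    congr 3 <;> omega
  rw [e1, e2, e3] at h
  simp only [Nat.succ_eq_add_one, Prod.fst, Prod.snd]
  have h2' : 2*m+2 = 2*(m+1) := by ring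
  rw [h2', h, two_mul]

lemma sum_range_even_odd' {M : Type*} [AddCommMonoid M] (g : ℕ → M) (N : ℕ) :
    ∑ k ∈ range (2 * N + 1), g k
      = ∑ i ∈ range (N + 1), g (2 * i) + ∑ i ∈ range N, g (2 * i + 1) := by
  rw [sum_range_succ, sum_range_even_odd, sum_range_succ]
  have : 2 * N = 2 * N := rfl
  abel

lemma catalan_odd_succ (m : ℕ) :
    catalan (2 * m + 3) =
      ∑ ij ∈ antidiagonal (m + 1), catalan (2 * ij.1) * catalan (2 * ij.2) +
      ∑ ij ∈ antidiagonal m, catalan (2 * ij.1 + 1) * catalan (2 * ij.2 + 1) := by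
  have h := catalan_succ' (2 * m + 2)
  rw [Finset.Nat.sum_antidiagonal_eq_sum_range_succ_mk] at h
  simp only [Nat.succ_eq_add_one, Prod.fst, Prod.snd] at h
  have h2 : (2 * m + 2) + 1 = 2 * (m + 1) + 1 := by ring
  rw [h2, sum_range_even_odd'] at h
  have e1 : ∑ i ∈ range (m+2), catalan (2*i) * catalan (2*m+2 - 2*i)
      = ∑ i ∈ range (m+2), catalan (2*i) * catalan (2*(m+1-i)) := by
    refine sum_congr rfl fun i hi => ?_
    have : i ≤ m + 1 := by simpa [Nat.lt_succ_iff] using hi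
    congr 2
    omega
  have e2 : ∑ i ∈ range (m+1), catalan (2*i+1) * catalan (2*m+2 - (2*i+1))
      = ∑ i ∈ range (m+1), catalan (2*i+1) * catalan (2*(m-i)+1) := by
    refine sum_congr rfl fun i hi => ?_
    have : i ≤ m := by simpa [Nat.lt_succ_iff] using hi
    congr 2
    omega
  rw [e1, e2] at h
  rw [Finset.Nat.sum_antidiagonal_eq_sum_range_succ_mk,
      Finset.Nat.sum_antidiagonal_eq_sum_range_succ_mk]
  simp only [Nat.succ_eq_add_one, Prod.fst, Prod.snd]
  have h3 : 2 * m + 3 = 2 * (m + 1) + 1 := by ring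
  rw [h3, h]


noncomputable def ce : ℚ⟦X⟧ := PowerSeries.mk fun i => (catalan (2 * i) : ℚ)
noncomputable def co : ℚ⟦X⟧ := PowerSeries.mk fun i => (catalan (2 * i + 1) : ℚ)
noncomputable def be : ℚ⟦X⟧ := PowerSeries.mk fun i => (Nat.centralBinom (2 * i) : ℚ)
noncomputable def bo : ℚ⟦X⟧ := PowerSeries.mk fun i => (Nat.centralBinom (2 * i + 1) : ℚ)

lemma hce : ce = 1 + C (2:ℚ) * (X * (ce * co)) := by
  ext n
  rw [map_add, coeff_one, coeff_C_mul]
  cases n with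
  | zero => simp [ce, coeff_zero_X_mul]
  | succ m =>
    rw [coeff_succ_X_mul, coeff_mul]
    simp only [ce, co, coeff_mk, if_neg (Nat.succ_ne_zero m)]
    rw [show 2*(m+1) = 2*m+2 by ring, catalan_even_succ m]
    push_cast [Finset.mul_sum]
    ring

lemma hco : co = ce ^ 2 + X * co ^ 2 := by
  ext n
  rw [map_add, sq, sq, coeff_mul]
  cases n with
  | zero =>
    rw [coeff_zero_X_mul]
    simp [co, ce, coeff_mk, Finset.Nat.antidiagonal_zero]
  | succ m =>
    rw [coeff_succ_X_mul, coeff_mul]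
    simp only [ce, co, coeff_mk]
    have := catalan_odd_succ m
    rw [show 2*(m+1)+1 = 2*m+3 by ring, this]
    push_cast
    ring




lemma hbe : be = ce + C (2:ℚ) * (X * d⁄dX ℚ ce) := by
  ext n
  rw [map_add, coeff_C_mul]
  cases n with
  | zero =>
    rw [coeff_zero_X_mul]
    simp [be, ce, Nat.centralBinom, catalan_zero]
  | succ m =>
    rw [coeff_succ_X_mul, coeff_derivative]
    simp only [be, ce, coeff_mk]
    have h := succ_mul_catalan_eq_centralBinom (2 * (m + 1))
    have : (Nat.centralBinom (2 * (m+1)) : ℚ) = ((2 * (m+1) + 1 : ℕ) : ℚ) * (catalan (2 * (m+1)) : ℚ) := by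
      exact_mod_cast h.symm
    rw [this]
    push_cast
    ring

lemma hbo : bo = C (2:ℚ) * co + C (2:ℚ) * (X * d⁄dX ℚ co) := by
  ext n
  rw [map_add, coeff_C_mul, coeff_C_mul]
  cases n with
  | zero =>
    rw [coeff_zero_X_mul]
    simp [bo, co, Nat.centralBinom, catalan_one]

  | succ m =>
    rw [coeff_succ_X_mul, coeff_derivative]
    simp only [bo, co, coeff_mk]
    have h := succ_mul_catalan_eq_centralBinom (2 * (m + 1) + 1)
    have : (Nat.centralBinom (2 * (m+1) + 1) : ℚ)
        = ((2 * (m+1) + 1 + 1 : ℕ) : ℚ) * (catalan (2 * (m+1) + 1) : ℚ) := by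
      exact_mod_cast h.symm
    rw [this]
    push_cast
    ring




lemma ce_ne_zero : ce ≠ 0 := by
  intro h
  have : (PowerSeries.coeff 0) ce = 0 := by rw [h]; simp
  simp [ce] at this

lemma main_ps : bo = 2 * ce ^ 2 * be := by
  have hC2 : C (2:ℚ) = (2 : ℚ⟦X⟧) := by exact map_ofNat C 2
  have hC4 : C (4:ℚ) = (4 : ℚ⟦X⟧) := by exact map_ofNat C 4
  have h2ne : (2 : ℚ⟦X⟧) ≠ 0 := by
    intro h
    have := congrArg (PowerSeries.coeff 0) h
    rw [← hC2] at this
    simp [PowerSeries.coeff_zero_eq_constantCoeff] at this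
  have hDX : d⁄dX ℚ (X : ℚ⟦X⟧) = 1 := derivative_X
  have hD2 : d⁄dX ℚ (2 : ℚ⟦X⟧) = 0 := by rw [← hC2]; exact derivative_C (r := 2)
  have hD4 : d⁄dX ℚ (4 : ℚ⟦X⟧) = 0 := by rw [← hC4]; exact derivative_C (r := 4)
  -- E : ce^2 = 1 + 4 X ce^4
  have hXE : X * ce ^ 2 = X * (1 + C (4:ℚ) * (X * ce ^ 4)) := by
    rw [hC4]
    have h1 := hce
    have h2 := hco
    rw [hC2] at h1
    linear_combination (4*X^2*ce^2) * h2 + (X*(1+ce-2*X*ce*co)) * h1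
  have hE : ce ^ 2 = 1 + C (4:ℚ) * (X * ce ^ 4) :=
    mul_left_cancel₀ PowerSeries.X_ne_zero hXE
  rw [hC4] at hE
  -- derivative of hE
  have hE' := congrArg (d⁄dX ℚ) hE
  simp [Derivation.leibniz, Derivation.leibniz_pow, Derivation.map_one_eq_zero,
    hDX, hD2, hD4, smul_eq_mul, nsmul_eq_mul] at hE'
  -- derivative of hce
  have hce' := congrArg (d⁄dX ℚ) hce
  simp [Derivation.leibniz, Derivation.map_one_eq_zero, derivative_C,
    hDX, hD2, hD4, smul_eq_mul, nsmul_eq_mul, hC2] at hce'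
  have h1 := hce
  rw [hC2] at h1
  -- key : d⁄dX ℚ ce * 2 = (2 ce^5 + 4 X ce^4 * d⁄dX ℚ ce) * 2
  have hkey2 : (2 : ℚ⟦X⟧) * d⁄dX ℚ ce = 2 * (2 * ce ^ 5 + 4 * X * ce ^ 4 * d⁄dX ℚ ce) := by
    linear_combination ce * hE' - 2 * (d⁄dX ℚ ce) * hE
  have hkey : d⁄dX ℚ ce = 2 * ce ^ 5 + 4 * X * ce ^ 4 * d⁄dX ℚ ce :=
    mul_left_cancel₀ h2ne hkey2
  -- G2 : 2 ce^2 (co + X d⁄dX ℚ co) = d⁄dX ℚ ce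
  have hG2 : 2 * ce ^ 2 * (co + X * d⁄dX ℚ co) = d⁄dX ℚ ce := by
    linear_combination (-ce) * hce' + (d⁄dX ℚ ce) * h1
  have hG1 : 2 * ce ^ 2 * (ce ^ 3 + 2 * X * ce ^ 2 * d⁄dX ℚ ce) = d⁄dX ℚ ce := by
    linear_combination -hkey
  have hcan : (2 : ℚ⟦X⟧) * ce ^ 2 ≠ 0 := by
    have : (ce : ℚ⟦X⟧) ^ 2 ≠ 0 := pow_ne_zero _ ce_ne_zero
    exact mul_ne_zero h2ne this
  have hMain : co + X * d⁄dX ℚ co = ce ^ 3 + 2 * X * ce ^ 2 * d⁄dX ℚ ce :=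
    mul_left_cancel₀ hcan (hG2.trans hG1.symm)
  rw [hbe, hbo, hC2]
  linear_combination 2 * hMain




/-- For every nonnegative integer `n`,
`2 ∑_{i+j+k=n} C_{2i} C_{2j} B_{2k} = B_{2n+1}`. -/
theorem two_mul_triple_convolution (n : ℕ) :
    2 * ∑ p ∈ Finset.HasAntidiagonal.antidiagonal n, ∑ q ∈ Finset.HasAntidiagonal.antidiagonal p.2,
        catalan (2 * p.1) * catalan (2 * q.1) * Nat.centralBinom (2 * q.2) =
      Nat.centralBinom (2 * n + 1) := by
  have hre : (2 : ℚ⟦X⟧) * ce ^ 2 * be = C (2:ℚ) * (ce * (ce * be)) := by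
    rw [map_ofNat C 2]; ring
  have h := congrArg (PowerSeries.coeff n) main_ps
  rw [hre, coeff_C_mul, coeff_mul] at h
  have hinner : ∀ p ∈ antidiagonal n,
      (PowerSeries.coeff p.1) ce * (PowerSeries.coeff p.2) (ce * be)
        = ∑ q ∈ antidiagonal p.2,
            (catalan (2 * p.1) : ℚ) * ((catalan (2 * q.1) : ℚ) * (Nat.centralBinom (2 * q.2) : ℚ)) := by
    intro p _
    rw [coeff_mul, Finset.mul_sum]
    refine sum_congr rfl fun q _ => ?_
    simp [ce, be, coeff_mk]
  rw [Finset.sum_congr rfl hinner] at h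
  simp only [bo, coeff_mk] at h
  apply Nat.cast_injective (R := ℚ)
  push_cast
  rw [h]
  push_cast
  congr 1
  refine sum_congr rfl fun p _ => ?_
  refine sum_congr rfl fun q _ => ?_
  ring
end

section
/- For every nonnegative integer n, the number of even-zeroed paths of length 4n (with no restriction on the total sum of steps) equals the sum over all pairs of nonnegative integers (i, j) with i + j = n of C_{2i} · B_{2j}. -/
open Finset List

namespace EZAux

/-- signed value of a boolean list -/
def sval (L : List Bool) : ℤ := (L.map fun b => if b then (1:ℤ) else -1).sum

@[simp] lemma sval_nil : sval [] = 0 := rfl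

lemma sval_append (L M : List Bool) : sval (L ++ M) = sval L + sval M := by
  simp [sval]

lemma sval_cons (b : Bool) (L : List Bool) :
    sval (b :: L) = (if b then (1:ℤ) else -1) + sval L := by
  simp [sval]

lemma even_sval_add_length (L : List Bool) : Even (sval L + L.length) := by
  induction L with
  | nil => simp
  | cons b L ih =>
    obtain ⟨t, ht⟩ := ih
    cases b
    · refine ⟨t, ?_⟩
      simp only [sval_cons, List.length_cons, Bool.false_eq_true, if_false]
      push_cast; linarith
    · refine ⟨t + 1, ?_⟩
      simp only [sval_cons, List.length_cons, if_true]
      push_cast; linarith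

lemma sval_take_succ (L : List Bool) (j : ℕ) (hj : j < L.length) :
    sval (L.take (j + 1)) = sval (L.take j) + (if L.get ⟨j, hj⟩ then (1:ℤ) else -1) := by
  rw [List.take_succ]
  have : L[j]? = some (L.get ⟨j, hj⟩) := List.getElem?_eq_getElem hj
  rw [this, Option.toList_some, sval_append]
  simp [sval_cons, List.get_eq_getElem]

/-- never returns to zero at a positive index -/
def NZp (L : List Bool) : Prop := ∀ k, k ≤ L.length → 0 < k → sval (L.take k) ≠ 0

/-- first return to zero is at the end -/
def FRp (L : List Bool) : Prop :=
  sval L = 0 ∧ ∀ k, k ≤ L.length → 0 < k → k < L.length → sval (L.take k) ≠ 0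

/-- all returns to zero at indices divisible by 4 -/
def EZp (L : List Bool) : Prop := ∀ k, k ≤ L.length → sval (L.take k) = 0 → 4 ∣ k

instance : DecidablePred NZp := fun L => by unfold NZp; exact Nat.decidableBallLE _ _
instance : DecidablePred FRp := fun L => by
  unfold FRp; exact instDecidableAnd (dq := Nat.decidableBallLE _ _)
instance : DecidablePred EZp := fun L => by unfold EZp; exact Nat.decidableBallLE _ _

/-- number of boolean lists of length `l` satisfying `P` -/
def cnt (l : ℕ) (P : List Bool → Prop) [DecidablePred P] : ℕ :=
  (Finset.univ.filter (fun v : List.Vector Bool l => P v.1)).card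

lemma cnt_congr {l : ℕ} {P Q : List Bool → Prop} [DecidablePred P] [DecidablePred Q]
    (h : ∀ L : List Bool, L.length = l → (P L ↔ Q L)) : cnt l P = cnt l Q := by
  unfold cnt
  congr 1
  apply Finset.filter_congr
  intro v _
  simpa using h v.1 v.2

lemma cnt_true (l : ℕ) : cnt l (fun _ => True) = 2 ^ l := by
  unfold cnt
  simp [Finset.filter_true_of_mem, card_vector]

lemma cnt_false (l : ℕ) : cnt l (fun _ => False) = 0 := by
  unfold cnt; simp


lemma cnt_split (a b : ℕ) (P Q : List Bool → Prop) [DecidablePred P] [DecidablePred Q] :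
    cnt (a + b) (fun L => P (L.take a) ∧ Q (L.drop a)) = cnt a P * cnt b Q := by
  unfold cnt
  rw [← Finset.card_product]
  apply Finset.card_bij'
    (i := fun v _ => (⟨v.1.take a, by rw [List.length_take, v.2]; omega⟩,
                      ⟨v.1.drop a, by rw [List.length_drop, v.2]; omega⟩))
    (j := fun x _ => ⟨x.1.1 ++ x.2.1, by rw [List.length_append, x.1.2, x.2.2]⟩)
  · intro v hv
    apply Subtype.ext
    exact List.take_append_drop a v.1
  · intro x hx
    apply Prod.ext
    · apply Subtype.ext; exact List.take_left' x.1.2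
    · apply Subtype.ext; exact List.drop_left' x.1.2
  · intro v hv
    simp only [Finset.mem_filter, Finset.mem_univ, true_and] at hv
    rw [Finset.mem_product]
    simp only [Finset.mem_filter, Finset.mem_univ, true_and]
    exact ⟨Finset.mem_filter.mpr ⟨Finset.mem_univ _, hv.1⟩, Finset.mem_filter.mpr ⟨Finset.mem_univ _, hv.2⟩⟩
  · intro x hx
    rw [Finset.mem_product] at hx
    simp only [Finset.mem_filter, Finset.mem_univ, true_and] at hx ⊢
    obtain ⟨h1, h2⟩ := hx
    refine Finset.mem_filter.mpr ⟨Finset.mem_univ _, ?_⟩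
    show P (List.take a (x.1.1 ++ x.2.1)) ∧ Q (List.drop a (x.1.1 ++ x.2.1))
    constructor
    · rwa [List.take_left' x.1.2]
    · rwa [List.drop_left' x.1.2]

instance fzDec (L : List Bool) : Decidable (∃ k, 0 < k ∧ k ≤ L.length ∧ sval (L.take k) = 0) :=
  decidable_of_iff (¬ ∀ k, k ≤ L.length → ¬ (0 < k ∧ sval (L.take k) = 0))
    (by push_neg; constructor
        · rintro ⟨k, h1, h2, h3⟩; exact ⟨k, h2, h1, h3⟩
        · rintro ⟨k, h1, h2, h3⟩; exact ⟨k, h2, h1, h3⟩)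

/-- index of first positive zero of the partial sums, or 0 if none -/
def fz (L : List Bool) : ℕ :=
  if h : ∃ k, 0 < k ∧ k ≤ L.length ∧ sval (L.take k) = 0 then Nat.find h else 0

lemma fz_eq_zero_iff (L : List Bool) : fz L = 0 ↔ NZp L := by
  unfold fz NZp
  split_ifs with h
  · constructor
    · intro h0
      have := Nat.find_spec h
      rw [h0] at this
      exact absurd this.1 (lt_irrefl 0)
    · intro hn
      obtain ⟨k, hk1, hk2, hk3⟩ := h
      exact absurd hk3 (hn k hk2 hk1)
  · constructor
    · intro _ k hk1 hk2 hk3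
      exact h ⟨k, hk2, hk1, hk3⟩
    · intro _; rfl

lemma fz_le (L : List Bool) : fz L ≤ L.length := by
  unfold fz
  split_ifs with h
  · exact (Nat.find_spec h).2.1
  · exact Nat.zero_le _

lemma fz_eq_pos_iff (L : List Bool) (c : ℕ) (hc : 0 < c) :
    fz L = c ↔ (c ≤ L.length ∧ sval (L.take c) = 0 ∧
      ∀ j, 0 < j → j < c → sval (L.take j) ≠ 0) := by
  unfold fz
  split_ifs with h
  · constructor
    · intro hfc
      have hs := Nat.find_spec h
      rw [hfc] at hs
      refine ⟨hs.2.1, hs.2.2, fun j hj1 hj2 hj3 => ?_⟩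
      have := Nat.find_min h (m := j) (by omega)
      exact this ⟨hj1, le_trans (le_of_lt hj2) hs.2.1, hj3⟩
    · intro ⟨h1, h2, h3⟩
      have hle : Nat.find h ≤ c := Nat.find_min' h ⟨hc, h1, h2⟩
      have hs := Nat.find_spec h
      by_contra hne
      exact h3 _ hs.1 (lt_of_le_of_ne hle hne) hs.2.2
  · constructor
    · intro h0; omega
    · intro ⟨h1, h2, _⟩
      exact absurd ⟨c, hc, h1, h2⟩ h

lemma cnt_fiber (l : ℕ) (P : List Bool → Prop) [DecidablePred P] :
    cnt l P = ∑ c ∈ Finset.range (l + 1), cnt l (fun L => P L ∧ fz L = c) := by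
  unfold cnt
  rw [Finset.card_eq_sum_card_fiberwise (f := fun v : List.Vector Bool l => fz v.1)
    (t := Finset.range (l + 1))]
  · apply Finset.sum_congr rfl
    intro c _
    rw [Finset.filter_filter]
  · intro v _
    refine Finset.mem_coe.mpr (Finset.mem_range.mpr ?_)
    show fz v.1 < l + 1
    have h1 := fz_le v.1
    have h2 := v.2
    omega


lemma sval_take_take (L : List Bool) {j c : ℕ} (hj : j ≤ c) :
    sval ((L.take c).take j) = sval (L.take j) := by
  rw [List.take_take, min_eq_left hj]

lemma sval_take_add (L : List Bool) (c j : ℕ) :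
    sval (L.take (c + j)) = sval (L.take c) + sval ((L.drop c).take j) := by
  rw [List.take_add, sval_append]

lemma length_take_of_le {L : List Bool} {c : ℕ} (h : c ≤ L.length) :
    (L.take c).length = c := by
  rw [List.length_take]; omega

lemma even_of_sval_take_zero {L : List Bool} {c : ℕ} (hcl : c ≤ L.length)
    (hz : sval (L.take c) = 0) : 2 ∣ c := by
  have h := even_sval_add_length (L.take c)
  rw [hz, length_take_of_le hcl, zero_add] at h
  obtain ⟨t, ht⟩ := h
  have : (c : ℤ) = 2 * t := by linarith
  omega

lemma cnt_FRp_odd {c : ℕ} (hc : ¬ 2 ∣ c) : cnt c FRp = 0 := by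
  unfold cnt
  rw [Finset.card_eq_zero, Finset.filter_eq_empty_iff]
  intro v _ hFR
  have h1 : sval (v.1.take c) = 0 := by
    rw [List.take_of_length_le (le_of_eq v.2)]
    exact hFR.1
  exact hc (even_of_sval_take_zero (le_of_eq v.2.symm) h1)

lemma take_drop_fiber (c : ℕ) (hc : 0 < c) (L : List Bool) (hcl : c ≤ L.length) :
    fz L = c ↔ FRp (L.take c) := by
  rw [fz_eq_pos_iff _ _ hc]
  have hlen : (L.take c).length = c := length_take_of_le hcl
  constructor
  · rintro ⟨h1, h2, h3⟩
    refine ⟨h2, fun k _ hk0 hkc => ?_⟩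
    rw [hlen] at hkc
    rw [sval_take_take _ (le_of_lt hkc)]
    exact h3 k hk0 hkc
  · rintro ⟨h1, h2⟩
    refine ⟨hcl, h1, fun j hj0 hjc => ?_⟩
    have := h2 j (by omega) hj0 (by omega)
    rwa [sval_take_take _ (le_of_lt hjc)] at this

lemma NZp_EZp {L : List Bool} (h : NZp L) : EZp L := by
  intro k hk hz
  rcases Nat.eq_zero_or_pos k with h0 | h0
  · omega
  · exact absurd hz (h k hk h0)

lemma EZ_fiber (c : ℕ) (hc : 0 < c) (h4 : 4 ∣ c) (L : List Bool) (hcl : c ≤ L.length) :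
    (EZp L ∧ fz L = c) ↔ (FRp (L.take c) ∧ EZp (L.drop c)) := by
  constructor
  · rintro ⟨hEZ, hfz⟩
    refine ⟨(take_drop_fiber c hc L hcl).mp hfz, fun j hj hz => ?_⟩
    rw [List.length_drop] at hj
    have hz2 : sval (L.take (c + j)) = 0 := by
      rw [sval_take_add, ((take_drop_fiber c hc L hcl).mp hfz).1, hz]
      ring
    have := hEZ (c + j) (by omega) hz2
    omega
  · rintro ⟨hFR, hEZd⟩
    have hfz : fz L = c := (take_drop_fiber c hc L hcl).mpr hFR
    refine ⟨fun k hk hz => ?_, hfz⟩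
    rcases Nat.lt_or_ge k c with hlt | hge
    · rcases Nat.eq_zero_or_pos k with h0 | h0
      · omega
      · rw [fz_eq_pos_iff _ _ hc] at hfz
        exact absurd hz (hfz.2.2 k h0 hlt)
    · have hj : sval ((L.drop c).take (k - c)) = 0 := by
        have := sval_take_add L c (k - c)
        rw [Nat.add_sub_cancel' hge] at this
        rw [this, hFR.1] at hz
        linarith
      have := hEZd (k - c) (by rw [List.length_drop]; omega) hj
      omega

lemma EZ_fiber_not4 (c : ℕ) (hc : 0 < c) (hn4 : ¬ 4 ∣ c) (L : List Bool) :
    ¬ (EZp L ∧ fz L = c) := by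
  rintro ⟨hEZ, hfz⟩
  rw [fz_eq_pos_iff _ _ hc] at hfz
  exact hn4 (hEZ c hfz.1 hfz.2.1)

lemma cnt_take_drop (l c : ℕ) (hcl : c ≤ l) (P Q : List Bool → Prop)
    [DecidablePred P] [DecidablePred Q] :
    cnt l (fun L => P (L.take c) ∧ Q (L.drop c)) = cnt c P * cnt (l - c) Q := by
  have h := Nat.add_sub_cancel' hcl
  conv_lhs => rw [← h]
  exact cnt_split c (l - c) P Q

lemma sum_range_even' (l m d : ℕ) (hd : 0 < d) (hl : l = d * m) (f : ℕ → ℕ)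
    (hf : ∀ c, 0 < c → c ≤ l → ¬ d ∣ c → f c = 0) :
    ∑ c ∈ Finset.range (l + 1), f c = f 0 + ∑ k ∈ Finset.Icc 1 m, f (d * k) := by
  have hins : Finset.range (l + 1) = insert 0 (Finset.Ioc 0 l) := by
    ext x; simp only [Finset.mem_range, Finset.mem_insert, Finset.mem_Ioc]; omega
  rw [hins, Finset.sum_insert (by simp)]
  congr 1
  have hsub : (Finset.Icc 1 m).image (fun k => d * k) ⊆ Finset.Ioc 0 l := by
    intro x hx
    simp only [Finset.mem_image, Finset.mem_Icc] at hx
    obtain ⟨k, ⟨hk1, hk2⟩, rfl⟩ := hx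
    simp only [Finset.mem_Ioc]
    constructor
    · positivity
    · rw [hl]; exact Nat.mul_le_mul_left d hk2
  rw [← Finset.sum_subset hsub]
  · rw [Finset.sum_image]
    intro a _ b _ hab
    exact Nat.eq_of_mul_eq_mul_left hd hab
  · intro x hx hnx
    simp only [Finset.mem_Ioc] at hx
    apply hf x hx.1 hx.2
    intro hdvd
    apply hnx
    obtain ⟨k, rfl⟩ := hdvd
    simp only [Finset.mem_image, Finset.mem_Icc]
    have hk1 : 1 ≤ k := by
      rcases Nat.eq_zero_or_pos k with h0 | h0
      · exfalso; subst h0; simp at hx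
      · exact h0
    have hk2 : k ≤ m := by
      by_contra hgt
      have : d * m < d * k := by
        exact Nat.mul_lt_mul_of_le_of_lt (le_refl d) (by omega) hd
      omega
    exact ⟨k, ⟨hk1, hk2⟩, rfl⟩


lemma cnt_fiber_zero (l : ℕ) (P : List Bool → Prop) [DecidablePred P]
    (hP : ∀ L, NZp L → P L) :
    cnt l (fun L => P L ∧ fz L = 0) = cnt l NZp := by
  apply cnt_congr
  intro L _
  rw [fz_eq_zero_iff]
  exact ⟨fun h => h.2, fun h => ⟨hP L h, h⟩⟩

lemma total_decomp (m : ℕ) :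
    4 ^ m = cnt (2 * m) NZp + ∑ k ∈ Finset.Icc 1 m, cnt (2 * k) FRp * 4 ^ (m - k) := by
  have hfib := cnt_fiber (2 * m) (fun _ => True)
  rw [cnt_true] at hfib
  rw [sum_range_even' (2 * m) m 2 (by omega) rfl _ ?_] at hfib
  · rw [cnt_fiber_zero (2*m) _ (fun _ _ => trivial)] at hfib
    have hsum : ∀ k ∈ Finset.Icc 1 m,
        cnt (2 * m) (fun L => True ∧ fz L = 2 * k) = cnt (2 * k) FRp * 4 ^ (m - k) := by
      intro k hk
      rw [Finset.mem_Icc] at hk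
      have hc : 0 < 2 * k := by omega
      have hcl : 2 * k ≤ 2 * m := by omega
      have h1 : cnt (2 * m) (fun L => True ∧ fz L = 2 * k) =
          cnt (2 * m) (fun L => FRp (L.take (2 * k)) ∧ (fun _ => True) (L.drop (2 * k))) := by
        apply cnt_congr
        intro L hL
        rw [true_and, take_drop_fiber (2 * k) hc L (by omega)]
        tauto
      rw [h1, cnt_take_drop (2 * m) (2 * k) hcl FRp (fun _ => True), cnt_true]
      congr 1
      have : 2 * m - 2 * k = 2 * (m - k) := by omega
      rw [this, pow_mul]
      norm_num
    rw [Finset.sum_congr rfl hsum] at hfib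
    have : (2:ℕ) ^ (2 * m) = 4 ^ m := by rw [pow_mul]; norm_num
    rw [this] at hfib
    exact hfib
  · intro c hc0 hcl hc2
    have h1 : cnt (2 * m) (fun L => True ∧ fz L = c) =
        cnt (2 * m) (fun L => FRp (L.take c) ∧ (fun _ => True) (L.drop c)) := by
      apply cnt_congr
      intro L hL
      rw [true_and, take_drop_fiber c hc0 L (by omega)]
      tauto
    rw [h1, cnt_take_drop (2 * m) c hcl FRp (fun _ => True), cnt_FRp_odd hc2, zero_mul]

lemma EZ_decomp (n : ℕ) :
    cnt (4 * n) EZp = cnt (4 * n) NZp +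
      ∑ k ∈ Finset.Icc 1 n, cnt (4 * k) FRp * cnt (4 * (n - k)) EZp := by
  have hfib := cnt_fiber (4 * n) EZp
  rw [sum_range_even' (4 * n) n 4 (by omega) rfl _ ?_] at hfib
  · rw [cnt_fiber_zero (4 * n) _ (fun _ h => NZp_EZp h)] at hfib
    have hsum : ∀ k ∈ Finset.Icc 1 n,
        cnt (4 * n) (fun L => EZp L ∧ fz L = 4 * k) = cnt (4 * k) FRp * cnt (4 * (n - k)) EZp := by
      intro k hk
      rw [Finset.mem_Icc] at hk
      have hc : 0 < 4 * k := by omega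
      have hcl : 4 * k ≤ 4 * n := by omega
      have h1 : cnt (4 * n) (fun L => EZp L ∧ fz L = 4 * k) =
          cnt (4 * n) (fun L => FRp (L.take (4 * k)) ∧ EZp (L.drop (4 * k))) := by
        apply cnt_congr
        intro L hL
        exact EZ_fiber (4 * k) hc ⟨k, rfl⟩ L (by omega)
      rw [h1, cnt_take_drop (4 * n) (4 * k) hcl FRp EZp]
      congr 2
      omega
    rw [Finset.sum_congr rfl hsum] at hfib
    exact hfib
  · intro c hc0 hcl hc4
    have h1 : cnt (4 * n) (fun L => EZp L ∧ fz L = c) = cnt (4 * n) (fun _ => False) := by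
      apply cnt_congr
      intro L hL
      simp only [iff_false]
      exact EZ_fiber_not4 c hc0 hc4 L
    rw [h1, cnt_false]

lemma sval_map_not (L : List Bool) : sval (L.map not) = - sval L := by
  induction L with
  | nil => simp
  | cons b t ih => cases b <;> simp [sval_cons, ih] <;> ring

lemma sval_take_map_not (L : List Bool) (k : ℕ) :
    sval ((L.map not).take k) = - sval (L.take k) := by
  rw [← List.map_take, sval_map_not]

lemma FRp_map_not_of (L : List Bool) (h : FRp L) : FRp (L.map not) := by
  obtain ⟨h1, h2⟩ := h
  constructor
  · rw [sval_map_not, h1, neg_zero]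
  · intro j hj1 hj2 hj3
    rw [List.length_map] at hj1 hj3
    rw [sval_take_map_not]
    exact neg_ne_zero.mpr (h2 j hj1 hj2 hj3)

lemma map_not_map_not (L : List Bool) : (L.map not).map not = L := by
  rw [List.map_map]
  have h : (not ∘ not) = id := by funext x; cases x <;> rfl
  rw [h, List.map_id]

lemma cnt_and_not (l : ℕ) (P Q : List Bool → Prop) [DecidablePred P] [DecidablePred Q] :
    cnt l P = cnt l (fun L => P L ∧ Q L) + cnt l (fun L => P L ∧ ¬ Q L) := by
  unfold cnt
  have h := Finset.card_filter_add_card_filter_not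
    (s := Finset.univ.filter (fun v : List.Vector Bool l => P v.1))
    (p := fun v => Q v.1)
  rw [Finset.filter_filter, Finset.filter_filter] at h
  exact h.symm

lemma cnt_map_not (l : ℕ) (P : List Bool → Prop) [DecidablePred P] :
    cnt l (fun L => P (L.map not)) = cnt l P := by
  unfold cnt
  apply Finset.card_bij' (i := fun (v : List.Vector Bool l) _ =>
      (⟨v.1.map not, by rw [List.length_map, v.2]⟩ : List.Vector Bool l))
    (j := fun (v : List.Vector Bool l) _ =>
      (⟨v.1.map not, by rw [List.length_map, v.2]⟩ : List.Vector Bool l))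
  · intro v _
    apply Subtype.ext
    exact map_not_map_not v.1
  · intro v _
    apply Subtype.ext
    exact map_not_map_not v.1
  · intro v hv
    simp only [Finset.mem_filter, Finset.mem_univ, true_and] at hv ⊢
    refine Finset.mem_filter.mpr ⟨Finset.mem_univ (α := List.Vector Bool l) _, ?_⟩
    exact hv
  · intro v hv
    refine Finset.mem_filter.mpr ⟨Finset.mem_univ _, ?_⟩
    show P ((v.1.map not).map not)
    rw [map_not_map_not v.1]
    exact (Finset.mem_filter.mp hv).2

lemma FR_pos {L : List Bool} (hFR : FRp L) (hhd : L.head? = some true) :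
    ∀ j, 0 < j → j < L.length → 0 < sval (L.take j) := by
  intro j
  induction j with
  | zero => intro h _; exact absurd h (lt_irrefl 0)
  | succ j ih =>
    intro _ hjl
    rcases Nat.eq_zero_or_pos j with rfl | hj
    · obtain ⟨t, rfl⟩ := List.head?_eq_some_iff.mp hhd
      simp [List.take_succ_cons, sval_cons, sval]
    · have h1 := ih hj (by omega)
      have h2 := sval_take_succ L j (by omega)
      have h3 : sval (L.take (j + 1)) ≠ 0 := hFR.2 (j + 1) (by omega) (by omega) (by omega)
      have h4 : sval (L.take j) - 1 ≤ sval (L.take (j + 1)) := by rw [h2]; split <;> omega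
      omega

lemma sval_eq_count (L : List Bool) :
    sval L = (L.count true : ℤ) - (L.count false : ℤ) := by
  induction L with
  | nil => simp
  | cons b t ih =>
    cases b <;> simp [sval_cons, List.count_cons, ih] <;> push_cast <;> ring

/-- map from booleans to Dyck steps -/
def bs (b : Bool) : DyckStep := if b then DyckStep.U else DyckStep.D

/-- map from Dyck steps to booleans -/
def sb (s : DyckStep) : Bool := s = DyckStep.U

@[simp] lemma sb_bs (b : Bool) : sb (bs b) = b := by cases b <;> rfl

lemma bs_injective : Function.Injective bs := by
  intro a b h
  cases a <;> cases b <;> simp [bs] at h ⊢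

lemma sb_injective : Function.Injective sb := by
  intro a b h
  cases a <;> cases b <;> simp [sb] at h ⊢

lemma count_map_sb_true (l : List DyckStep) :
    (l.map sb).count true = l.count DyckStep.U := by
  have h := List.count_map_of_injective l sb sb_injective DyckStep.U
  simpa [sb] using h

lemma count_map_sb_false (l : List DyckStep) :
    (l.map sb).count false = l.count DyckStep.D := by
  have h := List.count_map_of_injective l sb sb_injective DyckStep.D
  simpa [sb] using h

lemma count_map_bs_U (l : List Bool) :
    (l.map bs).count DyckStep.U = l.count true := by
  have h := List.count_map_of_injective l bs bs_injective true
  simpa [bs] using h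

lemma count_map_bs_D (l : List Bool) :
    (l.map bs).count DyckStep.D = l.count false := by
  have h := List.count_map_of_injective l bs bs_injective false
  simpa [bs] using h

lemma sval_take_cons_append (M : List Bool) (c : Bool) (j : ℕ) (hj : j ≤ M.length) :
    sval ((true :: (M ++ [c])).take (j + 1)) = 1 + sval (M.take j) := by
  rw [List.take_succ_cons, sval_cons]
  have h : (M ++ [c]).take j = M.take j := by
    rw [List.take_append]
    have : j - M.length = 0 := by omega
    rw [this]
    simp
  rw [h]
  norm_num

lemma count_true_add_count_false (L : List Bool) :
    L.count true + L.count false = L.length := by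
  induction L with
  | nil => rfl
  | cons b t ih => cases b <;> simp [List.count_cons] <;> omega

lemma sval_singleton (c : Bool) : sval [c] = if c then 1 else -1 := by
  simp [sval]

lemma FR_construct (M : List Bool) (hsv : sval M = 0) (hnn : ∀ j, 0 ≤ sval (M.take j)) :
    FRp (true :: M ++ [false]) := by
  constructor
  · rw [List.cons_append, sval_cons, sval_append, hsv, sval_singleton]
    norm_num
  · intro j hj1 hj2 hj3
    have hlen : (true :: M ++ [false]).length = M.length + 2 := by
      simp
    rw [hlen] at hj3
    obtain ⟨j', rfl⟩ : ∃ j', j = j' + 1 := ⟨j - 1, by omega⟩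
    have hj' : j' ≤ M.length := by omega
    rw [List.cons_append, sval_take_cons_append M false j' hj']
    have := hnn j'
    omega

lemma dyck_sval (p : DyckWord) : sval (p.toList.map sb) = 0 := by
  rw [sval_eq_count, count_map_sb_true, count_map_sb_false, p.count_U_eq_count_D]
  ring

lemma dyck_nn (p : DyckWord) (j : ℕ) : 0 ≤ sval ((p.toList.map sb).take j) := by
  rw [← List.map_take, sval_eq_count, count_map_sb_true, count_map_sb_false]
  have := p.count_D_le_count_U j
  omega

lemma cnt_FRp_true (k : ℕ) (hk : 1 ≤ k) :
    cnt (2 * k) (fun L => FRp L ∧ L.head? = some true) = catalan (k - 1) := by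
  have hcard :
      cnt (2 * k) (fun L => FRp L ∧ L.head? = some true) =
        Fintype.card {v : List.Vector Bool (2 * k) // FRp v.1 ∧ v.1.head? = some true} := by
    rw [Fintype.card_subtype]; rfl
  rw [hcard, ← DyckWord.card_dyckWord_semilength_eq_catalan (k - 1)]
  apply Fintype.card_congr
  apply Equiv.symm
  refine Equiv.ofBijective (fun p =>
    ⟨⟨true :: p.1.toList.map sb ++ [false], by
        have h1 : p.1.toList.length = 2 * (k - 1) := by
          have := p.1.two_mul_semilength_eq_length
          rw [p.2] at this
          omega
        simp [h1]
        omega⟩,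
      FR_construct _ (dyck_sval p.1) (dyck_nn p.1), rfl⟩) ⟨?_, ?_⟩
  · -- injective
    intro p q h
    have h2 : true :: p.1.toList.map sb ++ [false] = true :: q.1.toList.map sb ++ [false] := by
      have := congrArg (fun v => v.1.1) h
      simpa using this
    rw [List.cons_append, List.cons_append] at h2
    have h3 := List.cons_injective h2
    have h4 := (List.append_inj' h3 rfl).1
    apply Subtype.ext
    apply DyckWord.ext
    exact List.map_injective_iff.mpr sb_injective h4
  · -- surjective
    rintro ⟨v, hFR, hhd⟩
    obtain ⟨T, hT⟩ := List.head?_eq_some_iff.mp hhd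
    have hvlen : v.1.length = 2 * k := v.2
    have hTlen : T.length = 2 * k - 1 := by
      rw [hT] at hvlen
      simp at hvlen
      omega
    have hTne : T ≠ [] := by
      intro h0
      rw [h0] at hTlen
      simp at hTlen
      omega
    set I : List Bool := T.dropLast with hIdef
    set b : Bool := T.getLast hTne with hbdef
    have hTeq : T = I ++ [b] := (List.dropLast_append_getLast hTne).symm
    have hIlen : I.length = 2 * k - 2 := by
      rw [hIdef, List.length_dropLast, hTlen]
      omega
    have hdecomp : v.1 = true :: (I ++ [b]) := by rw [hT, hTeq]
    have hpos := FR_pos hFR hhd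
    have hsv : sval v.1 = 1 + sval I + (if b then 1 else -1) := by
      rw [hdecomp, sval_cons, sval_append, sval_singleton]
      norm_num
      ring
    have hint : sval (v.1.take (2 * k - 1)) = 1 + sval I := by
      have h1 : 2 * k - 1 = (2 * k - 2) + 1 := by omega
      rw [hdecomp, h1, sval_take_cons_append I b (2 * k - 2) (by omega),
        List.take_of_length_le (by omega)]
    have hp1 := hpos (2 * k - 1) (by omega) (by rw [hvlen]; omega)
    rw [hint] at hp1
    have h0 : sval v.1 = 0 := hFR.1
    have hbf : b = false := by
      cases hb : b
      · rfl
      · exfalso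
        rw [hb, if_pos rfl] at hsv
        omega
    have hIsval : sval I = 0 := by
      rw [hbf] at hsv
      simp only [Bool.false_eq_true, if_false] at hsv
      omega
    rw [hbf] at hdecomp
    have hInn : ∀ j, 0 ≤ sval (I.take j) := by
      intro j
      rcases Nat.lt_or_ge j I.length with hj | hj
      · have h1 : sval (v.1.take (j + 1)) = 1 + sval (I.take j) := by
          rw [hdecomp]
          exact sval_take_cons_append I false j (by omega)
        have h2 := hpos (j + 1) (by omega) (by rw [hvlen]; omega)
        omega
      · rw [List.take_of_length_le hj, hIsval]
    have hcnt : (I.count true : ℤ) - (I.count false : ℤ) = 0 := by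
      rw [← sval_eq_count]; exact hIsval
    refine ⟨⟨⟨I.map bs, ?_, ?_⟩, ?_⟩, ?_⟩
    · rw [count_map_bs_U, count_map_bs_D]
      omega
    · intro i
      rw [← List.map_take, count_map_bs_U, count_map_bs_D]
      have := hInn i
      rw [sval_eq_count] at this
      omega
    · show (I.map bs).count DyckStep.U = k - 1
      rw [count_map_bs_U]
      have h2 := count_true_add_count_false I
      omega
    · apply Subtype.ext
      apply Subtype.ext
      show true :: (I.map bs).map sb ++ [false] = v.1
      rw [List.map_map]
      have hid : I.map (sb ∘ bs) = I := by
        have h : (sb ∘ bs) = id := by funext x; cases x <;> rfl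
        rw [h, List.map_id]
      rw [hid, hdecomp, List.cons_append]

lemma cnt_FRp_even (k : ℕ) (hk : 1 ≤ k) : cnt (2 * k) FRp = 2 * catalan (k - 1) := by
  rw [cnt_and_not (2 * k) FRp (fun L => L.head? = some true)]
  have hfalse : cnt (2 * k) (fun L => FRp L ∧ ¬ L.head? = some true)
      = cnt (2 * k) (fun L => FRp L ∧ L.head? = some false) := by
    apply cnt_congr
    intro L hL
    have hne : L ≠ [] := by
      intro h0; rw [h0] at hL; simp at hL; omega
    obtain ⟨a, t, rfl⟩ := List.exists_cons_of_ne_nil hne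
    cases a <;> simp
  have hneg : cnt (2 * k) (fun L => FRp L ∧ L.head? = some false)
      = cnt (2 * k) (fun L => FRp L ∧ L.head? = some true) := by
    rw [← cnt_map_not (2 * k) (fun L => FRp L ∧ L.head? = some true)]
    apply cnt_congr
    intro L hL
    constructor
    · rintro ⟨h1, h2⟩
      refine ⟨FRp_map_not_of L h1, ?_⟩
      rw [List.head?_map, h2]
      rfl
    · rintro ⟨h1, h2⟩
      have h1' : FRp L := by
        have := FRp_map_not_of _ h1
        rwa [map_not_map_not] at this
      refine ⟨h1', ?_⟩
      rw [List.head?_map] at h2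
      cases hh : L.head? with
      | none => rw [hh] at h2; simp at h2
      | some a =>
        rw [hh] at h2
        cases a
        · rfl
        · simp at h2
  rw [hfalse, hneg, cnt_FRp_true k hk]
  omega

lemma centralBinom_succ_add (t : ℕ) :
    Nat.centralBinom (t + 1) + 2 * catalan t = 4 * Nat.centralBinom t := by
  apply Nat.eq_of_mul_eq_mul_left (show 0 < t + 1 from t.succ_pos)
  have h1 := Nat.succ_mul_centralBinom_succ t
  have h2 := succ_mul_catalan_eq_centralBinom t
  calc (t + 1) * (Nat.centralBinom (t + 1) + 2 * catalan t)
      = (t + 1) * Nat.centralBinom (t + 1) + 2 * ((t + 1) * catalan t) := by ring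
    _ = 2 * (2 * t + 1) * Nat.centralBinom t + 2 * Nat.centralBinom t := by rw [h1, h2]
    _ = (t + 1) * (4 * Nat.centralBinom t) := by ring

lemma four_pow_eq (m : ℕ) :
    4 ^ m = Nat.centralBinom m + ∑ k ∈ Finset.Icc 1 m, 2 * catalan (k - 1) * 4 ^ (m - k) := by
  induction m with
  | zero => simp [Nat.centralBinom]
  | succ m ih =>
    rw [Finset.sum_Icc_succ_top (by omega : 1 ≤ m + 1)]
    have hre : ∀ k ∈ Finset.Icc 1 m,
        2 * catalan (k - 1) * 4 ^ (m + 1 - k) = 4 * (2 * catalan (k - 1) * 4 ^ (m - k)) := by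
      intro k hk
      rw [Finset.mem_Icc] at hk
      have : m + 1 - k = (m - k) + 1 := by omega
      rw [this, pow_succ]
      ring
    rw [Finset.sum_congr rfl hre, ← Finset.mul_sum]
    have hE := centralBinom_succ_add m
    have hp : (4:ℕ) ^ (m + 1) = 4 * 4 ^ m := by ring
    simp only [Nat.add_sub_cancel, Nat.sub_self, pow_zero, mul_one]
    omega

lemma cnt_NZp_eq (m : ℕ) : cnt (2 * m) NZp = Nat.centralBinom m := by
  have h1 := total_decomp m
  have hsum : ∀ k ∈ Finset.Icc 1 m,
      cnt (2 * k) FRp * 4 ^ (m - k) = 2 * catalan (k - 1) * 4 ^ (m - k) := by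
    intro k hk
    rw [Finset.mem_Icc] at hk
    rw [cnt_FRp_even k hk.1]
  rw [Finset.sum_congr rfl hsum] at h1
  have h2 := four_pow_eq m
  omega


lemma sum_range_two_mul (n : ℕ) (f : ℕ → ℕ) :
    ∑ j ∈ Finset.range (2 * n), f j
      = ∑ t ∈ Finset.range n, f (2 * t) + ∑ t ∈ Finset.range n, f (2 * t + 1) := by
  induction n with
  | zero => simp
  | succ n ih =>
    have h : 2 * (n + 1) = 2 * n + 1 + 1 := by ring
    rw [h, Finset.sum_range_succ, Finset.sum_range_succ, Finset.sum_range_succ,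
        Finset.sum_range_succ, ih]
    omega

lemma catalan_even (i : ℕ) (hi : 1 ≤ i) :
    catalan (2 * i) = ∑ k ∈ Finset.Icc 1 i, 2 * catalan (2 * k - 1) * catalan (2 * (i - k)) := by
  have h1 : 2 * i = (2 * i - 1) + 1 := by omega
  rw [h1, catalan_succ]
  rw [Fin.sum_univ_eq_sum_range (fun j => catalan j * catalan (2 * i - 1 - j))]
  have h2 : 2 * i - 1 + 1 = 2 * i := by omega
  rw [Nat.succ_eq_add_one, h2, sum_range_two_mul]
  have hodd : ∀ t ∈ Finset.range i,
      catalan (2 * t + 1) * catalan (2 * i - 1 - (2 * t + 1))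
        = catalan (2 * t + 1) * catalan (2 * (i - 1 - t)) := by
    intro t ht
    rw [Finset.mem_range] at ht
    congr 2
    omega
  have heven : ∑ t ∈ Finset.range i, catalan (2 * t) * catalan (2 * i - 1 - 2 * t)
      = ∑ t ∈ Finset.range i, catalan (2 * t + 1) * catalan (2 * (i - 1 - t)) := by
    rw [← Finset.sum_range_reflect (fun t => catalan (2 * t + 1) * catalan (2 * (i - 1 - t))) i]
    apply Finset.sum_congr rfl
    intro t ht
    rw [Finset.mem_range] at ht
    have e1 : 2 * (i - 1 - t) + 1 = 2 * i - 1 - 2 * t := by omega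
    have e2 : i - 1 - (i - 1 - t) = t := by omega
    rw [e1, e2]
    ring
  rw [Finset.sum_congr rfl hodd, heven]
  have hIcc : ∑ k ∈ Finset.Icc 1 i, 2 * catalan (2 * k - 1) * catalan (2 * (i - k))
      = ∑ t ∈ Finset.range i, 2 * catalan (2 * t + 1) * catalan (2 * (i - 1 - t)) := by
    rw [← Finset.Ico_add_one_right_eq_Icc, Finset.sum_Ico_eq_sum_range]
    apply Finset.sum_congr (by congr 1 <;> omega)
    intro t ht
    rw [Finset.mem_range] at ht
    have e1 : 2 * (1 + t) - 1 = 2 * t + 1 := by omega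
    have e2 : i - (1 + t) = i - 1 - t := by omega
    rw [e1, e2]
  rw [hIcc, ← Finset.sum_add_distrib]
  apply Finset.sum_congr rfl
  intro t _
  ring

/-- the right-hand side as a range sum -/
def Rfun (n : ℕ) : ℕ := ∑ k ∈ Finset.range (n + 1), catalan (2 * k) * Nat.centralBinom (2 * (n - k))

lemma Rfun_rec (n : ℕ) (hn : 1 ≤ n) :
    Rfun n = Nat.centralBinom (2 * n)
      + ∑ k ∈ Finset.Icc 1 n, 2 * catalan (2 * k - 1) * Rfun (n - k) := by
  unfold Rfun
  rw [Finset.sum_range_succ']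
  have h0 : catalan (2 * 0) * Nat.centralBinom (2 * (n - 0)) = Nat.centralBinom (2 * n) := by
    norm_num [catalan_zero]
  rw [h0, add_comm]
  congr 1
  -- ∑ i ∈ range n, catalan (2*(i+1)) * centralBinom (2*(n-(i+1))) = ∑ k ∈ Icc 1 n, 2*...*Rfun (n-k)
  have step1 : ∑ i ∈ Finset.range n, catalan (2 * (i + 1)) * Nat.centralBinom (2 * (n - (i + 1)))
      = ∑ j ∈ Finset.Icc 1 n, catalan (2 * j) * Nat.centralBinom (2 * (n - j)) := by
    rw [← Finset.Ico_add_one_right_eq_Icc, Finset.sum_Ico_eq_sum_range]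
    apply Finset.sum_congr (by congr 1 <;> omega)
    intro t ht
    have e : 1 + t = t + 1 := by omega
    rw [e]
  rw [step1]
  have step2 : ∀ j ∈ Finset.Icc 1 n,
      catalan (2 * j) * Nat.centralBinom (2 * (n - j))
        = ∑ k ∈ Finset.Icc 1 j,
            2 * catalan (2 * k - 1) * (catalan (2 * (j - k)) * Nat.centralBinom (2 * (n - j))) := by
    intro j hj
    rw [Finset.mem_Icc] at hj
    rw [catalan_even j hj.1, Finset.sum_mul]
    apply Finset.sum_congr rfl
    intro k _
    ring
  rw [Finset.sum_congr rfl step2]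
  -- interchange
  have step3 : ∑ j ∈ Finset.Icc 1 n, ∑ k ∈ Finset.Icc 1 j,
        2 * catalan (2 * k - 1) * (catalan (2 * (j - k)) * Nat.centralBinom (2 * (n - j)))
      = ∑ k ∈ Finset.Icc 1 n, ∑ j ∈ Finset.Icc k n,
        2 * catalan (2 * k - 1) * (catalan (2 * (j - k)) * Nat.centralBinom (2 * (n - j))) := by
    apply Finset.sum_comm'
    intro j k
    simp only [Finset.mem_Icc]
    omega
  rw [step3]
  apply Finset.sum_congr rfl
  intro k hk
  rw [Finset.mem_Icc] at hk
  rw [← Finset.mul_sum]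
  congr 1
  -- inner: ∑ j ∈ Icc k n, catalan (2*(j-k)) * centralBinom (2*(n-j)) = Rfun (n-k)
  rw [← Finset.Ico_add_one_right_eq_Icc, Finset.sum_Ico_eq_sum_range]
  apply Finset.sum_congr (by congr 1 <;> omega)
  intro t ht
  rw [Finset.mem_range] at ht
  have e1 : k + t - k = t := by omega
  have e2 : n - (k + t) = n - k - t := by omega
  rw [e1, e2]


lemma cnt_EZp_zero : cnt 0 EZp = 1 := by
  have h : cnt 0 EZp = cnt 0 (fun _ => True) := by
    apply cnt_congr
    intro L hL
    simp only [iff_true]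
    intro k hk hz
    have : k = 0 := by omega
    omega
  rw [h, cnt_true]
  norm_num

lemma main_count (n : ℕ) : cnt (4 * n) EZp = Rfun n := by
  induction n using Nat.strong_induction_on with
  | _ n ih =>
    rcases Nat.eq_zero_or_pos n with rfl | hn
    · rw [show 4 * 0 = 0 by rfl, cnt_EZp_zero]
      unfold Rfun
      simp [catalan_zero, Nat.centralBinom]
    · rw [EZ_decomp n, Rfun_rec n hn]
      congr 1
      · have h : 4 * n = 2 * (2 * n) := by ring
        rw [h, cnt_NZp_eq]
      · apply Finset.sum_congr rfl
        intro k hk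
        rw [Finset.mem_Icc] at hk
        have h1 : 4 * k = 2 * (2 * k) := by ring
        rw [h1, cnt_FRp_even (2 * k) (by omega), ih (n - k) (by omega)]

lemma sval_ofFn_take {l : ℕ} (p : Fin l → Bool) (k : ℕ) :
    sval ((List.ofFn p).take k) = psum p k := by
  unfold sval psum
  rw [List.map_take, List.map_ofFn]
  have := List.sum_take_ofFn ((fun b => if b then (1:ℤ) else -1) ∘ p) k
  rw [this]
  simp [Function.comp]

lemma evenZeroed_iff {l : ℕ} (p : Fin l → Bool) : IsEvenZeroed p ↔ EZp (List.ofFn p) := by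
  unfold IsEvenZeroed EZp
  constructor
  · intro h k hk hz
    rw [List.length_ofFn] at hk
    exact h k hk (by rw [← sval_ofFn_take p k]; exact hz)
  · intro h k hk hz
    exact h k (by rw [List.length_ofFn]; exact hk) (by rw [sval_ofFn_take p k]; exact hz)

lemma nat_card_eq (l : ℕ) :
    Nat.card {p : Fin l → Bool // IsEvenZeroed p} = cnt l EZp := by
  have e : {p : Fin l → Bool // IsEvenZeroed p} ≃ {v : List.Vector Bool l // EZp v.1} := by
    apply Equiv.subtypeEquiv (Equiv.vectorEquivFin Bool l).symm
    intro p
    rw [evenZeroed_iff]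
    have hl : ((Equiv.vectorEquivFin Bool l).symm p).1 = List.ofFn p := by
      simp only [Equiv.vectorEquivFin, Equiv.coe_fn_symm_mk]
      exact List.Vector.toList_ofFn p
    rw [hl]
  rw [Nat.card_congr e, Nat.card_eq_fintype_card, Fintype.card_subtype]
  rfl

end EZAux

/-- For every nonnegative integer `n`, the number of even-zeroed paths of length `4n`
equals `∑_{i+j=n} C_{2i} B_{2j}`. -/
theorem card_evenZeroed_eq_convolution (n : ℕ) :
    Nat.card {p : Fin (4 * n) → Bool // IsEvenZeroed p} =
      ∑ ij ∈ Finset.HasAntidiagonal.antidiagonal n, catalan (2 * ij.1) * Nat.centralBinom (2 * ij.2) := by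
  rw [EZAux.nat_card_eq (4 * n), EZAux.main_count n]
  unfold EZAux.Rfun
  rw [Finset.Nat.sum_antidiagonal_eq_sum_range_succ_mk]
end

section
/- For every nonnegative integer n, the number of even-zeroed paths of length 4n + 1 whose total sum of steps equals 1 (i.e., even-zeroed paths from the origin to the point (4n+1, 1)) equals the sum over all pairs of nonnegative integers (i, j) with i + j = n of C_{2i} · C_{2j}. -/
open List

namespace EZPaths

/-- weight of a step -/
def wt (b : Bool) : ℤ := if b then 1 else -1

/-- total height change of a list of steps -/
def hs (L : List Bool) : ℤ := (L.map wt).sum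

@[simp] lemma hs_nil : hs [] = 0 := rfl
@[simp] lemma hs_cons (b : Bool) (L : List Bool) : hs (b :: L) = wt b + hs L := by
  simp [hs]
@[simp] lemma hs_append (L M : List Bool) : hs (L ++ M) = hs L + hs M := by
  simp [hs]
@[simp] lemma hs_singleton (b : Bool) : hs [b] = wt b := by simp [hs]

lemma hs_take_append (L M : List Bool) (k : ℕ) :
    hs ((L ++ M).take k) = hs (L.take k) + hs (M.take (k - L.length)) := by
  rw [take_append, hs_append]

lemma hs_take_append_of_le {k : ℕ} (L M : List Bool) (h : k ≤ L.length) :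
    hs ((L ++ M).take k) = hs (L.take k) := by
  rw [hs_take_append, Nat.sub_eq_zero_of_le h]; simp

lemma hs_take_append_of_ge {k : ℕ} (L M : List Bool) (h : L.length ≤ k) :
    hs ((L ++ M).take k) = hs L + hs (M.take (k - L.length)) := by
  rw [hs_take_append, take_of_length_le h]

lemma hs_take_drop (L : List Bool) (m j : ℕ) :
    hs ((L.drop m).take j) = hs (L.take (m + j)) - hs (L.take m) := by
  rcases le_or_gt m L.length with h | h
  · have hlen : (L.take m).length = m := by simp [h]
    have e1 : hs (L.take (m + j)) = hs (L.take m) + hs ((L.drop m).take j) := by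
      conv_lhs => rw [← take_append_drop m L]
      rw [hs_take_append, hlen, take_take, Nat.min_eq_right (Nat.le_add_right m j),
        Nat.add_sub_cancel_left]
    omega
  · rw [drop_eq_nil_of_le h.le,
      take_of_length_le (show L.length ≤ m + j by omega), take_of_length_le h.le]
    simp

lemma hs_take_succ (L : List Bool) (k : ℕ) :
    hs (L.take (k + 1)) = hs (L.take k) + hs (L[k]?.toList.map id) := by
  rw [take_succ, hs_append]
  simp

lemma hs_take_succ_bound (L : List Bool) (k : ℕ) :
    hs (L.take (k + 1)) ≤ hs (L.take k) + 1 ∧ hs (L.take k) ≤ hs (L.take (k + 1)) + 1 := by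
  rw [take_succ]
  rcases h : L[k]? with _ | b
  · simp
  · cases b <;> simp [wt] <;> omega

/-- discrete intermediate value: if the height is `≤ 0` at `a` and `≥ 0` at `a + n`,
it is `0` somewhere in between -/
lemma crossing_aux (L : List Bool) :
    ∀ n a, hs (L.take a) ≤ 0 → 0 ≤ hs (L.take (a + n)) →
      ∃ k, a ≤ k ∧ k ≤ a + n ∧ hs (L.take k) = 0 := by
  intro n
  induction n with
  | zero => exact fun a h1 h2 => ⟨a, le_rfl, le_rfl, le_antisymm h1 h2⟩
  | succ n ih =>
    intro a h1 h2
    rcases eq_or_lt_of_le h1 with h | h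
    · exact ⟨a, le_rfl, by omega, h⟩
    · have hstep := (hs_take_succ_bound L a).1
      obtain ⟨k, hk1, hk2, hk3⟩ := ih (a + 1) (by omega)
        (by rw [show a + 1 + n = a + (n + 1) by omega]; exact h2)
      exact ⟨k, by omega, by omega, hk3⟩

lemma crossing (L : List Bool) {a b : ℕ} (hab : a ≤ b) (ha : hs (L.take a) ≤ 0)
    (hb : 0 ≤ hs (L.take b)) : ∃ k, a ≤ k ∧ k ≤ b ∧ hs (L.take k) = 0 := by
  obtain ⟨n, rfl⟩ := Nat.exists_eq_add_of_le hab
  exact crossing_aux L n a ha hb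

@[simp] lemma hs_map_not (L : List Bool) : hs (L.map not) = -hs L := by
  induction L with
  | nil => simp
  | cons b L ih => cases b <;> simp [ih, wt] <;> ring

lemma crossing' (L : List Bool) {a b : ℕ} (hab : a ≤ b) (ha : 0 ≤ hs (L.take a))
    (hb : hs (L.take b) ≤ 0) : ∃ k, a ≤ k ∧ k ≤ b ∧ hs (L.take k) = 0 := by
  obtain ⟨k, h1, h2, h3⟩ := crossing (L.map not) hab
    (by rw [← map_take, hs_map_not]; omega) (by rw [← map_take, hs_map_not]; omega)
  rw [← map_take, hs_map_not] at h3
  exact ⟨k, h1, h2, by omega⟩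

lemma psum_eq_hs {l : ℕ} (p : Fin l → Bool) (k : ℕ) :
    psum p k = hs ((List.ofFn p).take k) := by
  induction k with
  | zero => simp [psum, hs]
  | succ k ih =>
    rw [take_succ]
    rcases lt_or_ge k l with h | h
    · have h1 : (ofFn p)[k]? = some (p ⟨k, h⟩) := by
        rw [getElem?_eq_some_iff]
        exact ⟨by simpa using h, by simp⟩
      have h2 : (Finset.univ.filter (fun i : Fin l => (i : ℕ) < k + 1)) =
          insert ⟨k, h⟩ (Finset.univ.filter (fun i : Fin l => (i : ℕ) < k)) := by
        ext i
        simp only [Finset.mem_filter, Finset.mem_insert, Finset.mem_univ, true_and]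
        constructor
        · intro hi
          rcases Nat.lt_succ_iff_lt_or_eq.mp hi with h' | h'
          · exact Or.inr h'
          · exact Or.inl (Fin.ext h')
        · rintro (rfl | hi)
          · simp
          · omega
      rw [psum, h2, Finset.sum_insert (by simp), h1]
      simp only [hs, map_append, sum_append]
      rw [← psum, ih]
      simp [hs, wt]
      ring
    · have h1 : (ofFn p)[k]? = none := by
        rw [getElem?_eq_none_iff]
        simpa using h
      have h2 : ∀ m, l ≤ m → (Finset.univ.filter (fun i : Fin l => (i : ℕ) < m)) =
          Finset.univ := by
        intro m hm
        ext i
        simp only [Finset.mem_filter, Finset.mem_univ, true_and, iff_true]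
        exact lt_of_lt_of_le i.isLt hm
      rw [psum, h2 _ (by omega), h1, ← h2 _ h, ← psum, ih]
      simp

/-- a subtype of lists with bounded length is finite -/
lemma finite_of_length_eq (P : List Bool → Prop) (l : ℕ) (hP : ∀ L, P L → L.length = l) :
    Finite {L : List Bool // P L} := by
  apply Finite.of_injective (fun L => (fun i : Fin l => L.1.getD i true))
  intro L M h
  have hL := hP L.1 L.2
  have hM := hP M.1 M.2
  ext1
  apply List.ext_getElem (by omega)
  intro i h1 h2
  have := congrFun h ⟨i, by omega⟩
  simpa [List.getD_eq_getElem?_getD, List.getElem?_eq_getElem, h1, h2] using this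

lemma nat_card_sigma {ι : Type*} [Fintype ι] (f : ι → Type*) [∀ i, Finite (f i)] :
    Nat.card ((i : ι) × f i) = ∑ i, Nat.card (f i) := by
  letI : ∀ i, Fintype (f i) := fun i => Fintype.ofFinite (f i)
  simp [Nat.card_eq_fintype_card]


end EZPaths

open List DyckStep

namespace EZPaths

/-- nonnegative balanced paths (Dyck paths) of length 2m -/
def Nn (m : ℕ) := {L : List Bool // L.length = 2 * m ∧ (∀ k, 0 ≤ hs (L.take k)) ∧ hs L = 0}

def b2d (b : Bool) : DyckStep := bif b then U else D
def d2b (s : DyckStep) : Bool := match s with | U => true | D => false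

@[simp] lemma d2b_b2d (b : Bool) : d2b (b2d b) = b := by cases b <;> rfl
@[simp] lemma b2d_d2b (s : DyckStep) : b2d (d2b s) = s := by cases s <;> rfl

lemma count_U_map (M : List Bool) : (M.map b2d).count U = M.count true := by
  induction M with
  | nil => rfl
  | cons b M ih => cases b <;> simp [b2d, ih, List.count_cons]

lemma count_D_map (M : List Bool) : (M.map b2d).count D = M.count false := by
  induction M with
  | nil => rfl
  | cons b M ih => cases b <;> simp [b2d, ih, List.count_cons]

lemma count_true_map (w : List DyckStep) : (w.map d2b).count true = w.count U := by
  induction w with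
  | nil => rfl
  | cons s w ih => cases s <;> simp [d2b, ih, List.count_cons]

lemma count_false_map (w : List DyckStep) : (w.map d2b).count false = w.count D := by
  induction w with
  | nil => rfl
  | cons s w ih => cases s <;> simp [d2b, ih, List.count_cons]

lemma hs_eq_counts (M : List Bool) : hs M = (M.count true : ℤ) - (M.count false : ℤ) := by
  induction M with
  | nil => simp
  | cons b M ih => cases b <;> simp [ih, wt, List.count_cons] <;> push_cast <;> ring

lemma length_eq_counts (M : List Bool) : M.length = M.count true + M.count false := by
  induction M with
  | nil => rfl
  | cons b M ih =>
    rw [length_cons, ih, List.count_cons, List.count_cons]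
    cases b <;> simp <;> omega

/-- the equivalence between balanced nonnegative ±1-paths and Dyck words -/
def nnEquiv (m : ℕ) : Nn m ≃ {p : DyckWord // p.semilength = m} where
  toFun L := ⟨⟨L.1.map b2d, by
      have h := hs_eq_counts L.1
      rw [L.2.2.2] at h
      rw [count_U_map, count_D_map]; omega, by
      intro i
      rw [← map_take, count_U_map, count_D_map]
      have h := hs_eq_counts (L.1.take i)
      have h2 := L.2.2.1 i
      omega⟩, by
      have h := hs_eq_counts L.1
      rw [L.2.2.2] at h
      have h2 := length_eq_counts L.1
      have h3 := L.2.1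
      show (L.1.map b2d).count U = m
      rw [count_U_map]; omega⟩
  invFun p := ⟨p.1.toList.map d2b, by
      have h := p.1.two_mul_semilength_eq_length
      rw [p.2] at h
      simp [h.symm], by
      constructor
      · intro k
        rw [← map_take]
        rw [hs_eq_counts, count_true_map, count_false_map]
        have := p.1.count_D_le_count_U k
        omega
      · rw [hs_eq_counts, count_true_map, count_false_map, p.1.count_U_eq_count_D]
        omega⟩
  left_inv L := by
    apply Subtype.ext
    simp only [map_map]
    have : d2b ∘ b2d = id := by funext b; simp
    rw [this, map_id]
  right_inv p := by
    apply Subtype.ext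
    apply DyckWord.ext
    simp only [map_map]
    have : b2d ∘ d2b = id := by funext s; simp
    rw [this, map_id]

lemma card_Nn (m : ℕ) : Nat.card (Nn m) = catalan m := by
  rw [Nat.card_congr (nnEquiv m), Nat.card_eq_fintype_card,
    DyckWord.card_dyckWord_semilength_eq_catalan]

end EZPaths
namespace EZPaths
open List

/-- paths of length 4m+1 ending at 1 which never return to 0 -/
def Pos (m : ℕ) := {L : List Bool //
  L.length = 4 * m + 1 ∧ (∀ k, 0 < k → k ≤ 4 * m + 1 → hs (L.take k) ≠ 0) ∧ hs L = 1}

/-- strictly-positive-inside (or strictly-negative-inside) excursions of length 4m -/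
def Arch (m : ℕ) := {L : List Bool //
  L.length = 4 * m ∧ (∀ k, 0 < k → k < 4 * m → hs (L.take k) ≠ 0) ∧ hs L = 0}

lemma pos_of_no_zero (L : List Bool) {l : ℕ} (hlen : L.length = l)
    (hnz : ∀ k, 0 < k → k ≤ l → hs (L.take k) ≠ 0) (hend : 0 < hs L) :
    ∀ k, 0 < k → k ≤ l → 0 < hs (L.take k) := by
  intro k hk hkl
  rcases lt_trichotomy (hs (L.take k)) 0 with h | h | h
  · obtain ⟨j, hj1, hj2, hj3⟩ := crossing L hkl h.le
      (by rw [take_of_length_le hlen.le]; omega)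
    exact absurd hj3 (hnz j (by omega) hj2)
  · exact absurd h (hnz k hk hkl)
  · exact h

lemma card_Pos (m : ℕ) : Nat.card (Pos m) = catalan (2 * m) := by
  rw [← card_Nn (2 * m)]
  refine (Nat.card_eq_of_bijective (fun T => (⟨true :: T.1, by
    simp [T.2.1]; omega, by
    constructor
    · intro k hk _
      obtain ⟨j, rfl⟩ := Nat.exists_eq_add_of_lt hk
      rw [Nat.zero_add, take_succ_cons, hs_cons]
      have := T.2.2.1 j
      simp only [wt, if_true]
      omega
    · rw [hs_cons, T.2.2.2]; simp [wt]⟩ : Pos m)) ?_).symm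
  constructor
  · intro T T' h
    apply Subtype.ext
    have := congrArg Subtype.val h
    simpa using this
  · rintro ⟨L, hlen, hnz, hend⟩
    have hpos := pos_of_no_zero L hlen hnz (by rw [hend]; norm_num)
    obtain ⟨b, R, rfl⟩ : ∃ b R, L = b :: R := by
      cases L with
      | nil => simp at hlen
      | cons b R => exact ⟨b, R, rfl⟩
    have hb : b = true := by
      have h1 := hpos 1 one_pos (by omega)
      rw [take_succ_cons, take_zero] at h1
      simp only [hs_cons, hs_nil, add_zero] at h1
      cases b
      · simp [wt] at h1
      · rfl
    subst hb
    have hRlen : R.length = 2 * (2 * m) := by simp at hlen; omega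
    have hend' : hs R = 0 := by
      rw [hs_cons] at hend
      simp only [wt, if_true] at hend
      omega
    refine ⟨⟨R, hRlen, ?_, hend'⟩, rfl⟩
    intro k
    rcases le_or_gt k R.length with h | h
    · have h2 := hpos (k + 1) (by omega) (by omega)
      rw [take_succ_cons, hs_cons] at h2
      simp only [wt, if_true] at h2
      omega
    · rw [take_of_length_le h.le, hend']

lemma arch_not {m : ℕ} (L : List Bool) (h1 : L.length = 4 * m)
    (h2 : ∀ k, 0 < k → k < 4 * m → hs (L.take k) ≠ 0) (h3 : hs L = 0) :
    (L.map not).length = 4 * m ∧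
      (∀ k, 0 < k → k < 4 * m → hs ((L.map not).take k) ≠ 0) ∧ hs (L.map not) = 0 := by
  refine ⟨by simp [h1], ?_, by rw [hs_map_not, h3]; ring⟩
  intro k hk hk2
  rw [← map_take, hs_map_not]
  have := h2 k hk hk2
  omega

/-- the positive-arch decomposition -/
lemma arch_pos_decomp {s : ℕ} (L : List Bool) (hlen : L.length = 4 * (s + 1))
    (hnz : ∀ k, 0 < k → k < 4 * (s + 1) → hs (L.take k) ≠ 0) (hend : hs L = 0)
    (hhead : hs (L.take 1) = 1) :
    ∃ T : Nn (2 * s + 1), L = true :: T.1 ++ [false] := by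
  have hpos : ∀ k, 0 < k → k < 4 * (s + 1) → 0 < hs (L.take k) := by
    intro k hk hkl
    rcases lt_trichotomy (hs (L.take k)) 0 with h | h | h
    · obtain ⟨j, hj1, hj2, hj3⟩ := crossing' L (show 1 ≤ k by omega) (by omega) h.le
      exact absurd hj3 (hnz j (by omega) (by omega))
    · exact absurd h (hnz k hk hkl)
    · exact h
  obtain ⟨b, R, rfl⟩ : ∃ b R, L = b :: R := by
    cases L with
    | nil => simp at hlen
    | cons b R => exact ⟨b, R, rfl⟩
  have hb : b = true := by
    rw [take_succ_cons, take_zero] at hhead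
    simp only [hs_cons, hs_nil, add_zero] at hhead
    cases b
    · simp [wt] at hhead
    · rfl
  subst hb
  have hRlen : R.length = 4 * s + 3 := by simp at hlen; omega
  have hRne : R ≠ [] := by intro h; rw [h] at hRlen; simp at hRlen
  obtain ⟨T, c, hRd⟩ : ∃ T c, R = T ++ [c] :=
    ⟨R.dropLast, R.getLast hRne, (dropLast_append_getLast hRne).symm⟩
  have hTlen : T.length = 4 * s + 2 := by
    have := congrArg List.length hRd
    simp at this
    omega
  have hf3 : hs ((true :: R).take (4 * s + 3)) = 1 := by
    have h1 := hpos (4 * s + 3) (by omega) (by omega)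
    have h2 := (hs_take_succ_bound (true :: R) (4 * s + 3)).2
    rw [take_of_length_le (show (true :: R).length ≤ 4 * s + 3 + 1 by simp [hRlen]),
      hend] at h2
    omega
  have htake3 : (true :: R).take (4 * s + 3) = true :: T := by
    conv_lhs => rw [hRd]
    rw [take_succ_cons, take_append, hTlen,
      take_of_length_le (by omega)]
    simp
  have hhsT : hs T = 0 := by
    rw [htake3, hs_cons] at hf3
    simp only [wt, if_true] at hf3
    omega
  have hcval : c = false := by
    have h5 := hend
    rw [hRd] at h5
    simp only [hs_cons, hs_append, hs_singleton, hhsT] at h5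
    cases c
    · rfl
    · simp [wt] at h5
  refine ⟨⟨T, by omega, ?_, hhsT⟩, by rw [hRd, hcval]; rfl⟩
  intro k
  rcases le_or_gt k T.length with h | h
  · have h2 := hpos (k + 1) (by omega) (by omega)
    conv at h2 => rw [hRd]
    rw [take_succ_cons, hs_cons, hs_take_append_of_le _ _ h] at h2
    simp only [wt, if_true] at h2
    omega
  · rw [take_of_length_le h.le, hhsT]

lemma card_Arch (s : ℕ) : Nat.card (Arch (s + 1)) = 2 * catalan (2 * s + 1) := by
  have hcard : Nat.card (Bool × Nn (2 * s + 1)) = 2 * catalan (2 * s + 1) := by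
    rw [Nat.card_prod, card_Nn, Nat.card_eq_fintype_card, Fintype.card_bool]
  rw [← hcard]
  have harch : ∀ T : Nn (2 * s + 1), (true :: T.1 ++ [false]).length = 4 * (s + 1) ∧
      (∀ k, 0 < k → k < 4 * (s + 1) → hs ((true :: T.1 ++ [false]).take k) ≠ 0) ∧
      hs (true :: T.1 ++ [false]) = 0 := by
    intro T
    have hTlen := T.2.1
    refine ⟨by simp [hTlen]; omega, ?_, ?_⟩
    · intro k hk hk2
      obtain ⟨j, rfl⟩ := Nat.exists_eq_add_of_lt hk
      rw [Nat.zero_add, cons_append, take_succ_cons, hs_cons,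
        hs_take_append_of_le _ _ (by omega)]
      have := T.2.2.1 j
      simp only [wt, if_true]
      omega
    · simp only [hs_cons, hs_append, hs_singleton, T.2.2.2, wt]
      norm_num
  refine (Nat.card_eq_of_bijective
    (fun bT => (⟨bif bT.1 then (true :: bT.2.1 ++ [false])
                 else (true :: bT.2.1 ++ [false]).map not, by
      obtain ⟨a1, a2, a3⟩ := harch bT.2
      cases hb : bT.1
      · simp only [hb, cond_false]
        exact arch_not _ a1 a2 a3
      · simp only [hb, cond_true]
        exact ⟨a1, a2, a3⟩⟩ : Arch (s + 1))) ?_).symm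
  have hmapinj : Function.Injective (List.map not : List Bool → List Bool) := by
    intro x y h
    have := congrArg (List.map not) h
    simpa [map_map, Function.comp_def, Bool.not_not] using this
  constructor
  · rintro ⟨b, T⟩ ⟨b', T'⟩ h
    have hv := congrArg Subtype.val h
    simp only at hv
    have hbb : b = b' := by
      by_contra hne
      cases b <;> cases b' <;> simp_all [map_cons]
    subst hbb
    have hNT : true :: T.1 ++ [false] = true :: T'.1 ++ [false] := by
      cases b
      · exact hmapinj (by simpa using hv)
      · simpa using hv
    have hTT : T.1 = T'.1 := by
      rw [cons_append, cons_append, List.cons.injEq] at hNT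
      exact (List.append_left_inj _).mp hNT.2
    exact Prod.ext rfl (Subtype.ext hTT)
  · rintro ⟨L, h1, h2, h3⟩
    obtain ⟨b, R, rfl⟩ : ∃ b R, L = b :: R := by
      cases L with
      | nil => simp at h1
      | cons b R => exact ⟨b, R, rfl⟩
    cases b
    · obtain ⟨m1, m2, m3⟩ := arch_not _ h1 h2 h3
      obtain ⟨T, hT⟩ := arch_pos_decomp _ m1 m2 m3 (by
        rw [map_cons, take_succ_cons, take_zero]
        simp [wt])
      refine ⟨(false, T), Subtype.ext ?_⟩
      simp only [cond_false]
      rw [← hT]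
      simp [map_map, Function.comp_def, Bool.not_not]
    · obtain ⟨T, hT⟩ := arch_pos_decomp _ h1 h2 h3 (by
        rw [take_succ_cons, take_zero]
        simp [wt])
      exact ⟨(true, T), Subtype.ext (by simpa using hT.symm)⟩

end EZPaths
namespace EZPaths
open List Finset

lemma sum_range_pair (f : ℕ → ℕ) (m : ℕ) :
    ∑ i ∈ Finset.range (2 * m), f i = ∑ s ∈ Finset.range m, (f (2 * s) + f (2 * s + 1)) := by
  induction m with
  | zero => simp
  | succ m ih =>
    rw [show 2 * (m + 1) = 2 * m + 1 + 1 by ring, Finset.sum_range_succ, Finset.sum_range_succ,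
      ih, Finset.sum_range_succ]
    ring

lemma catalan_identity (t : ℕ) :
    catalan (2 * (t + 1)) =
      ∑ s ∈ Finset.range (t + 1), 2 * catalan (2 * s + 1) * catalan (2 * (t - s)) := by
  have h1 : catalan (2 * (t + 1)) =
      ∑ k ∈ Finset.range (2 * t + 2), catalan k * catalan (2 * t + 1 - k) := by
    rw [show 2 * (t + 1) = (2 * t + 1) + 1 by ring, catalan_succ',
      Finset.Nat.sum_antidiagonal_eq_sum_range_succ_mk]
  rw [h1, show 2 * t + 2 = 2 * (t + 1) by ring, sum_range_pair]
  have h2 : ∀ s ∈ Finset.range (t + 1),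
      catalan (2 * s) * catalan (2 * t + 1 - 2 * s) +
        catalan (2 * s + 1) * catalan (2 * t + 1 - (2 * s + 1)) =
      catalan (2 * s) * catalan (2 * (t - s) + 1) +
        catalan (2 * s + 1) * catalan (2 * (t - s)) := by
    intro s hs
    rw [Finset.mem_range] at hs
    rw [show 2 * t + 1 - 2 * s = 2 * (t - s) + 1 by omega,
      show 2 * t + 1 - (2 * s + 1) = 2 * (t - s) by omega]
  rw [Finset.sum_congr rfl h2, Finset.sum_add_distrib]
  have h3 : ∑ s ∈ Finset.range (t + 1), catalan (2 * s) * catalan (2 * (t - s) + 1) =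
      ∑ s ∈ Finset.range (t + 1), catalan (2 * s + 1) * catalan (2 * (t - s)) := by
    rw [← Finset.sum_range_reflect]
    apply Finset.sum_congr rfl
    intro s hs
    rw [Finset.mem_range] at hs
    rw [show t + 1 - 1 - s = t - s by omega, show t - (t - s) = s by omega]
    ring
  rw [h3, ← Finset.sum_add_distrib]
  apply Finset.sum_congr rfl
  intro s _
  ring

/-- even-zeroed lists -/
def EZL (L : List Bool) : Prop := ∀ k ≤ L.length, hs (L.take k) = 0 → 4 ∣ k

/-- even-zeroed balanced paths of length 4t -/
def Ez (t : ℕ) := {L : List Bool // L.length = 4 * t ∧ EZL L ∧ hs L = 0}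

instance (t : ℕ) : Finite (Ez t) := finite_of_length_eq _ (4 * t) (fun _ h => h.1)
instance (m : ℕ) : Finite (Arch m) := finite_of_length_eq _ (4 * m) (fun _ h => h.1)
instance (m : ℕ) : Finite (Pos m) := finite_of_length_eq _ (4 * m + 1) (fun _ h => h.1)

lemma card_Ez : ∀ t, Nat.card (Ez t) = catalan (2 * t) := by
  intro t
  induction t using Nat.strong_induction_on with
  | _ t ih =>
  cases t with
  | zero =>
    haveI : Unique (Ez 0) :=
      { default := ⟨[], by simp, by
          intro k hk _
          simp only [length_nil, Nat.le_zero] at hk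
          exact hk ▸ ⟨0, rfl⟩, rfl⟩
        uniq := fun x => Subtype.ext (List.eq_nil_of_length_eq_zero (by simpa using x.2.1)) }
    rw [Nat.card_unique]
    simp
  | succ t =>
    have key : Nat.card ((s : Fin (t + 1)) × (Arch (s.1 + 1) × Ez (t - s.1))) =
        Nat.card (Ez (t + 1)) := by
      apply Nat.card_eq_of_bijective (fun x => (⟨x.2.1.1 ++ x.2.2.1, by
        obtain ⟨s, a, e⟩ := x
        obtain ⟨alen, anz, a0⟩ := a.2
        obtain ⟨elen, eez, e0⟩ := e.2
        dsimp only
        have hs' : s.1 ≤ t := by omega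
        refine ⟨by simp [alen, elen]; omega, ?_, by simp [a0, e0]⟩
        intro k hk hz
        simp only [length_append, alen, elen] at hk
        rcases le_or_gt k (4 * (s.1 + 1)) with h | h
        · rw [hs_take_append_of_le _ _ (by omega)] at hz
          rcases Nat.eq_zero_or_pos k with rfl | hkpos
          · exact ⟨0, rfl⟩
          · rcases eq_or_lt_of_le h with rfl | hlt
            · exact ⟨s.1 + 1, rfl⟩
            · exact absurd hz (anz k hkpos (by omega))
        · rw [hs_take_append_of_ge _ _ (by omega), a0, zero_add, alen] at hz
          have h4 := eez (k - 4 * (s.1 + 1)) (by omega) hz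
          omega⟩ : Ez (t + 1)))
      constructor
      · rintro ⟨s, a, e⟩ ⟨s', a', e'⟩ h
        have hv := congrArg Subtype.val h
        simp only at hv
        obtain ⟨alen, anz, a0⟩ := a.2
        obtain ⟨alen', anz', a0'⟩ := a'.2
        have hss : s.1 = s'.1 := by
          rcases lt_trichotomy s.1 s'.1 with hlt | heq | hgt
          · exfalso
            have hz : hs ((a.1 ++ e.1).take (4 * (s.1 + 1))) = 0 := by
              rw [hs_take_append_of_le _ _ (by omega), take_of_length_le (by omega)]
              exact a0
            rw [hv, hs_take_append_of_le _ _ (by omega)] at hz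
            exact anz' _ (by omega) (by omega) hz
          · exact heq
          · exfalso
            have hz : hs ((a'.1 ++ e'.1).take (4 * (s'.1 + 1))) = 0 := by
              rw [hs_take_append_of_le _ _ (by omega), take_of_length_le (by omega)]
              exact a0'
            rw [← hv, hs_take_append_of_le _ _ (by omega)] at hz
            exact anz _ (by omega) (by omega) hz
        have hsseq : s = s' := Fin.ext hss
        subst hsseq
        obtain ⟨h5, h6⟩ := append_inj hv (by omega)
        obtain rfl : a = a' := Subtype.ext h5
        obtain rfl : e = e' := Subtype.ext h6
        rfl
      · rintro ⟨L, hlen, hez, h0⟩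
        have hex : ∃ k, 0 < k ∧ k ≤ 4 * (t + 1) ∧ hs (L.take k) = 0 :=
          ⟨4 * (t + 1), by omega, le_rfl, by rw [take_of_length_le hlen.le]; exact h0⟩
        classical
        set k0 := Nat.find hex with hk0def
        obtain ⟨hk0pos, hk0le, hk0z⟩ := Nat.find_spec hex
        have hmin : ∀ j, j < k0 → ¬(0 < j ∧ j ≤ 4 * (t + 1) ∧ hs (L.take j) = 0) :=
          fun j hj => Nat.find_min hex hj
        have hdvd : 4 ∣ k0 := hez k0 (by omega) hk0z
        obtain ⟨u, hu⟩ := hdvd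
        have hu1 : 1 ≤ u := by omega
        have hu2 : u ≤ t + 1 := by omega
        have ha : (L.take k0).length = 4 * ((u - 1) + 1) ∧
            (∀ k, 0 < k → k < 4 * ((u - 1) + 1) → hs ((L.take k0).take k) ≠ 0) ∧
            hs (L.take k0) = 0 := by
          refine ⟨by rw [length_take]; omega, ?_, hk0z⟩
          intro k hk hklt
          rw [take_take, Nat.min_eq_left (by omega)]
          intro hz
          exact hmin k (by omega) ⟨hk, by omega, hz⟩
        have hL : hs L = hs (L.take k0) + hs (L.drop k0) := by
          conv_lhs => rw [← take_append_drop k0 L]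
          rw [hs_append]
        have he : (L.drop k0).length = 4 * (t - (u - 1)) ∧ EZL (L.drop k0) ∧
            hs (L.drop k0) = 0 := by
          refine ⟨by rw [length_drop]; omega, ?_, by omega⟩
          intro j hj hz
          rw [length_drop] at hj
          rw [hs_take_drop, hk0z, sub_zero] at hz
          have h8 := hez (k0 + j) (by omega) hz
          omega
        exact ⟨⟨⟨u - 1, by omega⟩, ⟨L.take k0, ha⟩, ⟨L.drop k0, he⟩⟩,
          Subtype.ext (take_append_drop k0 L)⟩
    rw [← key, nat_card_sigma]
    have hterm : ∀ s : Fin (t + 1), Nat.card (Arch (s.1 + 1) × Ez (t - s.1)) =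
        2 * catalan (2 * s.1 + 1) * catalan (2 * (t - s.1)) := by
      intro s
      rw [Nat.card_prod, card_Arch, ih (t - s.1) (by omega)]
    rw [Finset.sum_congr rfl (fun s _ => hterm s),
      Fin.sum_univ_eq_sum_range (fun s => 2 * catalan (2 * s + 1) * catalan (2 * (t - s)))]
    exact (catalan_identity t).symm

end EZPaths
namespace EZPaths
open List Finset

/-- even-zeroed paths of length 4n+1 ending at height 1 -/
def Az (n : ℕ) := {L : List Bool // L.length = 4 * n + 1 ∧ EZL L ∧ hs L = 1}

instance (n : ℕ) : Finite (Az n) := finite_of_length_eq _ (4 * n + 1) (fun _ h => h.1)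

lemma card_Az (n : ℕ) : Nat.card (Az n) =
    ∑ i ∈ Finset.range (n + 1), catalan (2 * i) * catalan (2 * (n - i)) := by
  have key : Nat.card ((s : Fin (n + 1)) × (Ez s.1 × Pos (n - s.1))) = Nat.card (Az n) := by
    apply Nat.card_eq_of_bijective (fun x => (⟨x.2.1.1 ++ x.2.2.1, by
      obtain ⟨s, e, p⟩ := x
      obtain ⟨elen, eez, e0⟩ := e.2
      obtain ⟨plen, pnz, p1⟩ := p.2
      dsimp only
      have hs' : s.1 ≤ n := by omega
      refine ⟨by simp [elen, plen]; omega, ?_, by simp [e0, p1]⟩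
      intro k hk hz
      simp only [length_append, elen, plen] at hk
      rcases le_or_gt k (4 * s.1) with h | h
      · rw [hs_take_append_of_le _ _ (by omega)] at hz
        exact eez k (by omega) hz
      · rw [hs_take_append_of_ge _ _ (by omega), e0, zero_add, elen] at hz
        exact absurd hz (pnz (k - 4 * s.1) (by omega) (by omega))⟩ : Az n))
    constructor
    · rintro ⟨s, e, p⟩ ⟨s', e', p'⟩ h
      have hv := congrArg Subtype.val h
      simp only at hv
      obtain ⟨elen, eez, e0⟩ := e.2
      obtain ⟨plen, pnz, p1⟩ := p.2
      obtain ⟨elen', eez', e0'⟩ := e'.2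
      obtain ⟨plen', pnz', p1'⟩ := p'.2
      have hss : s.1 = s'.1 := by
        rcases lt_trichotomy s.1 s'.1 with hlt | heq | hgt
        · exfalso
          have hz : hs ((e'.1 ++ p'.1).take (4 * s'.1)) = 0 := by
            rw [hs_take_append_of_le _ _ (by omega), take_of_length_le (by omega)]
            exact e0'
          rw [← hv, hs_take_append_of_ge _ _ (by omega), e0, zero_add, elen] at hz
          exact pnz (4 * s'.1 - 4 * s.1) (by omega) (by omega) hz
        · exact heq
        · exfalso
          have hz : hs ((e.1 ++ p.1).take (4 * s.1)) = 0 := by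
            rw [hs_take_append_of_le _ _ (by omega), take_of_length_le (by omega)]
            exact e0
          rw [hv, hs_take_append_of_ge _ _ (by omega), e0', zero_add, elen'] at hz
          exact pnz' (4 * s.1 - 4 * s'.1) (by omega) (by omega) hz
      have hsseq : s = s' := Fin.ext hss
      subst hsseq
      obtain ⟨h5, h6⟩ := append_inj hv (by omega)
      obtain rfl : e = e' := Subtype.ext h5
      obtain rfl : p = p' := Subtype.ext h6
      rfl
    · rintro ⟨L, hlen, hez, h1⟩
      classical
      set k0 := Nat.findGreatest (fun k => hs (L.take k) = 0) (4 * n + 1) with hk0def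
      have hP0 : hs (L.take 0) = 0 := by simp
      have hk0z : hs (L.take k0) = 0 := by
        exact Nat.findGreatest_spec (P := fun k => hs (L.take k) = 0) (m := 0) (by omega) hP0
      have hk0le : k0 ≤ 4 * n + 1 := Nat.findGreatest_le _
      have hmax : ∀ k, k0 < k → k ≤ 4 * n + 1 → hs (L.take k) ≠ 0 := by
        intro k hk hk2
        exact Nat.findGreatest_is_greatest (P := fun k => hs (L.take k) = 0) hk hk2
      have hdvd : 4 ∣ k0 := hez k0 (by omega) hk0z
      obtain ⟨u, hu⟩ := hdvd
      have hu2 : u ≤ n := by omega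
      have hL : hs L = hs (L.take k0) + hs (L.drop k0) := by
        conv_lhs => rw [← take_append_drop k0 L]
        rw [hs_append]
      have he : (L.take k0).length = 4 * u ∧ EZL (L.take k0) ∧ hs (L.take k0) = 0 := by
        refine ⟨by rw [length_take]; omega, ?_, hk0z⟩
        intro k hk hz
        rw [length_take] at hk
        rw [take_take, Nat.min_eq_left (by omega)] at hz
        exact hez k (by omega) hz
      have hp : (L.drop k0).length = 4 * (n - u) + 1 ∧
          (∀ k, 0 < k → k ≤ 4 * (n - u) + 1 → hs ((L.drop k0).take k) ≠ 0) ∧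
          hs (L.drop k0) = 1 := by
        refine ⟨by rw [length_drop]; omega, ?_, by omega⟩
        intro k hk hkle
        rw [hs_take_drop, hk0z, sub_zero]
        exact hmax (k0 + k) (by omega) (by omega)
      exact ⟨⟨⟨u, by omega⟩, ⟨L.take k0, he⟩, ⟨L.drop k0, hp⟩⟩,
        Subtype.ext (take_append_drop k0 L)⟩
  rw [← key, nat_card_sigma]
  have hterm : ∀ s : Fin (n + 1), Nat.card (Ez s.1 × Pos (n - s.1)) =
      catalan (2 * s.1) * catalan (2 * (n - s.1)) := by
    intro s
    rw [Nat.card_prod, card_Ez, card_Pos]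
  rw [Finset.sum_congr rfl (fun s _ => hterm s),
    Fin.sum_univ_eq_sum_range (fun s => catalan (2 * s) * catalan (2 * (n - s)))]

end EZPaths

open EZPaths in
/-- For every nonnegative integer `n`, the number of even-zeroed paths of length `4n + 1`
whose total sum of steps is `1` (even-zeroed paths from the origin to `(4n+1, 1)`)
equals `∑_{i+j=n} C_{2i} C_{2j}`. -/
theorem card_evenZeroed_to_one (n : ℕ) :
    Nat.card {p : Fin (4 * n + 1) → Bool // IsEvenZeroed p ∧ psum p (4 * n + 1) = 1} =
      ∑ ij ∈ Finset.HasAntidiagonal.antidiagonal n, catalan (2 * ij.1) * catalan (2 * ij.2) := by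
  classical
  have heq : Nat.card {p : Fin (4 * n + 1) → Bool // IsEvenZeroed p ∧ psum p (4 * n + 1) = 1} =
      Nat.card (Az n) := by
    apply Nat.card_eq_of_bijective (fun p => (⟨List.ofFn p.1, by
      refine ⟨by simp, ?_, ?_⟩
      · intro k hk hz
        rw [List.length_ofFn] at hk
        exact p.2.1 k hk (by rw [psum_eq_hs]; exact hz)
      · have h1 := p.2.2
        rw [psum_eq_hs, List.take_of_length_le (by simp)] at h1
        exact h1⟩ : Az n))
    constructor
    · intro p q h
      have hv := congrArg Subtype.val h
      simp only at hv
      exact Subtype.ext (List.ofFn_injective hv)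
    · rintro ⟨L, hlen, hez, h1⟩
      set q : Fin (4 * n + 1) → Bool := fun i => L.get ⟨i.1, by rw [hlen]; exact i.2⟩ with hq
      have hofn : List.ofFn q = L := by
        apply List.ext_get (by simp [hlen])
        intro i hi1 hi2
        rw [List.get_ofFn]
        rfl
      refine ⟨⟨q, ?_, ?_⟩, Subtype.ext hofn⟩
      · intro k hk hz
        rw [psum_eq_hs, hofn] at hz
        exact hez k (by omega) hz
      · rw [psum_eq_hs, hofn, List.take_of_length_le (by omega)]
        exact h1
  rw [heq, card_Az, Finset.Nat.sum_antidiagonal_eq_sum_range_succ_mk]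
end
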